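/- Let d ≥ 1, ω ≥ 0 and M > 0. Let 𝒜 = (A_k)_{k∈ℤ+} be a sequence of linear isomorphisms of ℝ^d such that ‖A_k‖ ≤ M and ‖A_k⁻¹‖ ≤ M for all k ∈ ℤ+. If 𝒜 has Perron property B_ω(ℤ+), then 𝒜 is hyperbolic on ℤ+. -/

import Mathlib

noncomputable section

open Filter Topology

/-- `ℝ^d`. -/
abbrev Ed (d : ℕ) := EuclideanSpace ℝ (Fin d)

/-- The weight `(|k| + 1) ^ ω`. -/
noncomputable def wt (ω : ℝ) (k : ℤ) : ℝ := (|(k : ℝ)| + 1) ^ ω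

/-- `PhiNat A l n = A (l+n-1) ∘ … ∘ A l`. -/
noncomputable def PhiNat {d : ℕ} (A : ℤ → (Ed d ≃L[ℝ] Ed d)) (l : ℤ) :
    ℕ → (Ed d ≃L[ℝ] Ed d)
  | 0 => ContinuousLinearEquiv.refl ℝ (Ed d)
  | n + 1 => (PhiNat A l n).trans (A (l + n))

/-- The Cauchy matrix `Φ_{m,l}`. -/
noncomputable def Phi {d : ℕ} (A : ℤ → (Ed d ≃L[ℝ] Ed d)) (m l : ℤ) : Ed d ≃L[ℝ] Ed d :=
  if l ≤ m then PhiNat A l (m - l).toNat else (PhiNat A m (l - m).toNat).symm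

/-- Hyperbolicity on `I` with explicit data. -/
def HyperbolicOnWith {d : ℕ} (A : ℤ → (Ed d ≃L[ℝ] Ed d)) (I : Set ℤ) (K lam : ℝ)
    (P Q : ℤ → (Ed d →L[ℝ] Ed d)) : Prop :=
  0 < K ∧ 0 < lam ∧ lam < 1 ∧
  (∀ k ∈ I, P k + Q k = 1) ∧
  (∀ k ∈ I, (P k).comp (P k) = P k ∧ (Q k).comp (Q k) = Q k) ∧
  (∀ k ∈ I, IsCompl (LinearMap.range (P k : Ed d →ₗ[ℝ] Ed d)) (LinearMap.range (Q k : Ed d →ₗ[ℝ] Ed d))) ∧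
  (∀ k ∈ I, k + 1 ∈ I →
      (A k) '' ((LinearMap.range (P k : Ed d →ₗ[ℝ] Ed d)) : Set (Ed d)) = ((LinearMap.range (P (k + 1) : Ed d →ₗ[ℝ] Ed d)) : Set (Ed d)) ∧
      (A k) '' ((LinearMap.range (Q k : Ed d →ₗ[ℝ] Ed d)) : Set (Ed d)) = ((LinearMap.range (Q (k + 1) : Ed d →ₗ[ℝ] Ed d)) : Set (Ed d))) ∧
  (∀ l ∈ I, ∀ k ∈ I, l ≤ k → ∀ v ∈ LinearMap.range (P l : Ed d →ₗ[ℝ] Ed d),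
      ‖(Phi A k l) v‖ ≤ K * lam ^ (k - l).toNat * ‖v‖) ∧
  (∀ l ∈ I, ∀ k ∈ I, k ≤ l → ∀ v ∈ LinearMap.range (Q l : Ed d →ₗ[ℝ] Ed d),
      ‖(Phi A k l) v‖ ≤ K * lam ^ (l - k).toNat * ‖v‖) ∧
  (∀ k ∈ I, ‖P k‖ ≤ K ∧ ‖Q k‖ ≤ K)

/-- The sequence `A` is hyperbolic on `I`. -/
def IsHyperbolicOn {d : ℕ} (A : ℤ → (Ed d ≃L[ℝ] Ed d)) (I : Set ℤ) : Prop :=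
  ∃ (K lam : ℝ) (P Q : ℤ → (Ed d →L[ℝ] Ed d)), HyperbolicOnWith A I K lam P Q

/-- Perron property `B_ω(ℤ+)`. -/
def PerronBPos {d : ℕ} (ω : ℝ) (A : ℤ → (Ed d ≃L[ℝ] Ed d)) : Prop :=
  ∀ f : ℤ → Ed d, f 0 = 0 → (∃ C : ℝ, ∀ k : ℤ, 0 ≤ k → ‖f k‖ * wt ω k ≤ C) →
    ∃ x : ℤ → Ed d, (∃ C : ℝ, ∀ k : ℤ, 0 ≤ k → ‖x k‖ * wt ω k ≤ C) ∧
      ∀ k : ℤ, 0 ≤ k → x (k + 1) = A k (x k) + f (k + 1)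

/-- Perron property `B_ω(ℤ)`. -/
def PerronBZ {d : ℕ} (ω : ℝ) (A : ℤ → (Ed d ≃L[ℝ] Ed d)) : Prop :=
  ∀ f : ℤ → Ed d, (∃ C : ℝ, ∀ k : ℤ, ‖f k‖ * wt ω k ≤ C) →
    ∃ x : ℤ → Ed d, (∃ C : ℝ, ∀ k : ℤ, ‖x k‖ * wt ω k ≤ C) ∧
      ∀ k : ℤ, x (k + 1) = A k (x k) + f (k + 1)

/-- `B^+(𝒜)`. -/
def Bplus {d : ℕ} (A : ℤ → (Ed d ≃L[ℝ] Ed d)) : Set (Ed d) :=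
  {v | Tendsto (fun k : ℤ => ‖(Phi A k 0) v‖) atTop (𝓝 0)}

/-- `B^-(𝒜)`. -/
def Bminus {d : ℕ} (A : ℤ → (Ed d ≃L[ℝ] Ed d)) : Set (Ed d) :=
  {v | Tendsto (fun k : ℤ => ‖(Phi A k 0) v‖) atBot (𝓝 0)}

namespace PerronAux

/-! ### weights -/

/-- `w ω k = (k+1)^ω` for natural `k`. -/
noncomputable def w (ω : ℝ) (k : ℕ) : ℝ := ((k : ℝ) + 1) ^ ω

lemma inv_mul_mul_cancel {a b : ℝ} (ha : a ≠ 0) : a⁻¹ * b * a = b := by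
  rw [mul_comm a⁻¹ b, mul_assoc, inv_mul_cancel₀ ha, mul_one]

lemma w_zero (ω : ℝ) : w ω 0 = 1 := by
  simp [w, Real.one_rpow]

lemma wt_natCast (ω : ℝ) (k : ℕ) : wt ω (k : ℤ) = w ω k := by
  simp [wt, w, abs_of_nonneg, Nat.cast_nonneg]

lemma w_pos (ω : ℝ) (k : ℕ) : 0 < w ω k := by
  have : (0:ℝ) < (k:ℝ) + 1 := by positivity
  exact Real.rpow_pos_of_pos this ω

lemma one_le_w {ω : ℝ} (hω : 0 ≤ ω) (k : ℕ) : 1 ≤ w ω k :=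
  Real.one_le_rpow (by push_cast; linarith [Nat.cast_nonneg (α := ℝ) k]) hω

lemma w_mono {ω : ℝ} (hω : 0 ≤ ω) {k m : ℕ} (h : k ≤ m) : w ω k ≤ w ω m := by
  apply Real.rpow_le_rpow (by positivity) _ hω
  have := (Nat.cast_le (α := ℝ)).2 h; push_cast; linarith

lemma w_succ_le {ω : ℝ} (hω : 0 ≤ ω) (k : ℕ) : w ω (k + 1) ≤ 2 ^ ω * w ω k := by
  rw [w, w, ← Real.mul_rpow (by norm_num) (by positivity)]
  apply Real.rpow_le_rpow (by positivity) _ hω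
  push_cast; nlinarith [Nat.cast_nonneg (α := ℝ) k]

lemma w_ratio {ω : ℝ} (hω : 0 ≤ ω) (n t : ℕ) :
    w ω (n + t) ≤ ((t : ℝ) + 1) ^ ω * w ω n := by
  rw [w, w, ← Real.mul_rpow (by positivity) (by positivity)]
  apply Real.rpow_le_rpow (by positivity) _ hω
  push_cast; nlinarith [Nat.cast_nonneg (α := ℝ) n, Nat.cast_nonneg (α := ℝ) t]


/-! ### Phi lemmas -/

variable {d : ℕ} (A : ℤ → (Ed d ≃L[ℝ] Ed d))

lemma phiNat_succ_bot (l : ℤ) (n : ℕ) :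
    PhiNat A l (n + 1) = (A l).trans (PhiNat A (l + 1) n) := by
  induction n generalizing l with
  | zero =>
    ext v
    simp [PhiNat]
  | succ n ih =>
    ext v
    have h1 : PhiNat A l (n + 1 + 1) = (PhiNat A l (n+1)).trans (A (l + (n+1 : ℕ))) := rfl
    have h2 : PhiNat A (l+1) (n + 1) = (PhiNat A (l+1) n).trans (A (l + 1 + (n : ℕ))) := rfl
    have hc : l + ((n:ℤ) + 1) = l + 1 + (n:ℤ) := by ring
    simp only [h1, h2, ih l, ContinuousLinearEquiv.trans_apply]
    push_cast [hc]
    ring_nf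

lemma phi_self (n : ℤ) (v : Ed d) : Phi A n n v = v := by
  simp [Phi, PhiNat]

lemma phi_step (n k : ℤ) (v : Ed d) : Phi A (k + 1) n v = A k (Phi A k n v) := by
  rcases le_or_gt n k with h | h
  · have h1 : n ≤ k + 1 := by omega
    have h2 : (k + 1 - n).toNat = (k - n).toNat + 1 := by omega
    have h3 : n + ((k - n).toNat : ℤ) = k := by omega
    rw [Phi, Phi, if_pos h1, if_pos h, h2]
    show (PhiNat A n ((k-n).toNat)).trans (A (n + ((k-n).toNat : ℤ))) v = _
    rw [h3]
    simp [ContinuousLinearEquiv.trans_apply]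
  · rcases eq_or_lt_of_le (by omega : k + 1 ≤ n) with h2 | h2
    · subst h2
      rw [phi_self]
      have hn : ¬ (k + 1 ≤ k) := by omega
      rw [Phi, if_neg hn]
      have h4 : (k + 1 - k).toNat = 1 := by omega
      rw [h4]
      have h5 : PhiNat A k 1 = (A k) := by ext v; simp [PhiNat]
      rw [h5]
      simp
    · have hn1 : ¬ (n ≤ k + 1) := by omega
      have hn2 : ¬ (n ≤ k) := by omega
      rw [Phi, Phi, if_neg hn1, if_neg hn2]
      have h4 : (n - k).toNat = (n - (k+1)).toNat + 1 := by omega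
      rw [h4, phiNat_succ_bot]
      simp [ContinuousLinearEquiv.symm_trans_apply]

lemma phi_step' (n k : ℤ) (v : Ed d) : Phi A k n v = (A k).symm (Phi A (k + 1) n v) := by
  rw [phi_step]; simp

lemma phi_cocycle_up (l n : ℤ) (v : Ed d) : ∀ k, l ≤ k → Phi A k l (Phi A l n v) = Phi A k n v :=
  Int.le_induction (phi_self _ _ _)
    (fun m _ ih => by rw [phi_step, phi_step, ih])

lemma phi_cocycle_down (l n : ℤ) (v : Ed d) : ∀ k, k ≤ l → Phi A k l (Phi A l n v) = Phi A k n v :=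
  Int.le_induction_down (phi_self _ _ _)
    (fun m _ ih => by
      rw [phi_step' A _ (m-1), phi_step' A _ (m-1)]
      simp only [sub_add_cancel]
      rw [ih])

lemma phi_cocycle (k l n : ℤ) (v : Ed d) : Phi A k l (Phi A l n v) = Phi A k n v := by
  rcases le_or_gt l k with h | h
  · exact phi_cocycle_up A l n v k h
  · exact phi_cocycle_down A l n v k (le_of_lt h)


/-! ### Admissibility constant -/

/-- Uniform admissibility statement. -/
def ADMprop {d : ℕ} (ω : ℝ) (A : ℤ → (Ed d ≃L[ℝ] Ed d)) (L : ℝ) : Prop :=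
  ∀ (f : ℕ → Ed d) (c : ℝ), (∀ k, ‖f k‖ * w ω k ≤ c) →
    ∃ x : ℕ → Ed d, (∀ k, ‖x k‖ * w ω k ≤ L * c) ∧
      ∀ k : ℕ, x (k + 1) = A (k : ℤ) (x k) + f (k + 1)

lemma norm_A_apply_le {d : ℕ} {M : ℝ} {A : ℤ → (Ed d ≃L[ℝ] Ed d)}
    (hA : ∀ k : ℤ, 0 ≤ k → ‖(A k : Ed d →L[ℝ] Ed d)‖ ≤ M ∧
      ‖((A k).symm : Ed d →L[ℝ] Ed d)‖ ≤ M) (k : ℕ) (v : Ed d) :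
    ‖A (k : ℤ) v‖ ≤ M * ‖v‖ := by
  have h1 : ‖A (k : ℤ) v‖ ≤ ‖(A (k:ℤ) : Ed d →L[ℝ] Ed d)‖ * ‖v‖ :=
    (A (k:ℤ) : Ed d →L[ℝ] Ed d).le_opNorm v
  exact h1.trans (mul_le_mul_of_nonneg_right ((hA k (by positivity)).1) (norm_nonneg v))

lemma exists_adm {d : ℕ} {ω M : ℝ} {A : ℤ → (Ed d ≃L[ℝ] Ed d)} (hω : 0 ≤ ω) (hM : 0 < M)
    (hA : ∀ k : ℤ, 0 ≤ k → ‖(A k : Ed d →L[ℝ] Ed d)‖ ≤ M ∧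
      ‖((A k).symm : Ed d →L[ℝ] Ed d)‖ ≤ M)
    (hperron : PerronBPos ω A) : ∃ L, 1 ≤ L ∧ ADMprop ω A L := by
  classical
  set ρ : ℝ := 2 ^ ω with hρdef
  have hρ : 0 < ρ := Real.rpow_pos_of_pos (by norm_num) ω
  have hAb := norm_A_apply_le hA
  have hwratio : ∀ k : ℕ, w ω (k+1) / w ω k ≤ ρ := fun k => by
    rw [div_le_iff₀ (w_pos ω k)]
    calc w ω (k+1) ≤ 2 ^ ω * w ω k := w_succ_le hω k
    _ = ρ * w ω k := rfl
  have hwrnn : ∀ k : ℕ, 0 ≤ w ω (k+1) / w ω k := fun k =>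
    le_of_lt (div_pos (w_pos ω (k+1)) (w_pos ω k))
  -- the bounded-difference operator
  have hDbb : ∀ y : BoundedContinuousFunction ℕ (Ed d), ∀ k : ℕ,
      ‖y (k+1) - (w ω (k+1) / w ω k) • (A (k:ℤ) (y k))‖ ≤ (1 + ρ * M) * ‖y‖ := by
    intro y k
    have h1 : ‖y (k+1)‖ ≤ ‖y‖ := y.norm_coe_le_norm (k+1)
    have h2 : ‖(w ω (k+1) / w ω k) • (A (k:ℤ) (y k))‖ ≤ ρ * (M * ‖y‖) := by
      rw [norm_smul, Real.norm_eq_abs, abs_of_nonneg (hwrnn k)]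
      have h3 : ‖A (k:ℤ) (y k)‖ ≤ M * ‖y‖ :=
        (hAb k (y k)).trans (mul_le_mul_of_nonneg_left (y.norm_coe_le_norm k) hM.le)
      have := mul_le_mul (hwratio k) h3 (norm_nonneg _) hρ.le
      linarith
    calc ‖y (k+1) - (w ω (k+1) / w ω k) • (A (k:ℤ) (y k))‖
        ≤ ‖y (k+1)‖ + ‖(w ω (k+1) / w ω k) • (A (k:ℤ) (y k))‖ := norm_sub_le _ _
      _ ≤ ‖y‖ + ρ * (M * ‖y‖) := add_le_add h1 h2
      _ = (1 + ρ * M) * ‖y‖ := by ring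
  let D0 : BoundedContinuousFunction ℕ (Ed d) →ₗ[ℝ] BoundedContinuousFunction ℕ (Ed d) :=
    { toFun := fun y => BoundedContinuousFunction.ofNormedAddCommGroup
        (fun k => y (k+1) - (w ω (k+1) / w ω k) • (A (k:ℤ) (y k)))
        continuous_of_discreteTopology ((1 + ρ * M) * ‖y‖) (hDbb y)
      map_add' := by
        intro y z
        refine BoundedContinuousFunction.ext fun k => ?_
        simp only [BoundedContinuousFunction.coe_ofNormedAddCommGroup,
          BoundedContinuousFunction.coe_add, Pi.add_apply, map_add, smul_add]
        abel
      map_smul' := by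
        intro r y
        refine BoundedContinuousFunction.ext fun k => ?_
        simp only [BoundedContinuousFunction.coe_ofNormedAddCommGroup,
          BoundedContinuousFunction.coe_smul, Pi.smul_apply, map_smul,
          RingHom.id_apply, smul_sub]
        rw [smul_comm]
    }
  let D := D0.mkContinuous (1 + ρ * M) (fun y => by
    apply BoundedContinuousFunction.norm_le (by positivity) |>.2
    intro k
    exact hDbb y k)
  have hDapp : ∀ (y : BoundedContinuousFunction ℕ (Ed d)) (k : ℕ),
      D y k = y (k+1) - (w ω (k+1) / w ω k) • (A (k:ℤ) (y k)) := by
    intro y k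
    show (D0 y) k = _
    simp only [D0, LinearMap.coe_mk, AddHom.coe_mk,
      BoundedContinuousFunction.coe_ofNormedAddCommGroup]
  have hsurj : Function.Surjective D := by
    intro g
    set F : ℤ → Ed d := fun k => if h : 1 ≤ k then (w ω k.toNat)⁻¹ • g (k.toNat - 1) else 0
      with hF
    have hF0 : F 0 = 0 := by simp [hF]
    have hFb : ∀ k : ℤ, 0 ≤ k → ‖F k‖ * wt ω k ≤ ‖g‖ := by
      intro k hk
      by_cases h1 : 1 ≤ k
      · have hkn : ((k.toNat : ℤ)) = k := Int.toNat_of_nonneg hk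
        have hwt : wt ω k = w ω k.toNat := by rw [← wt_natCast, hkn]
        rw [hF]
        simp only [dif_pos h1]
        rw [hwt, norm_smul, Real.norm_eq_abs,
          abs_of_nonneg (inv_nonneg.2 (w_pos ω k.toNat).le),
          inv_mul_mul_cancel (w_pos ω k.toNat).ne']
        exact g.norm_coe_le_norm _
      · have : F k = 0 := by simp [hF, h1]
        rw [this]
        simp only [norm_zero, zero_mul]
        exact norm_nonneg g
    obtain ⟨x, ⟨C, hC⟩, hrec⟩ := hperron F hF0 ⟨‖g‖, hFb⟩
    have hybb : ∀ k : ℕ, ‖w ω k • x (k : ℤ)‖ ≤ max C 0 := by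
      intro k
      rw [norm_smul, Real.norm_eq_abs, abs_of_nonneg (w_pos ω k).le]
      have := hC (k : ℤ) (Int.natCast_nonneg k)
      rw [wt_natCast] at this
      calc w ω k * ‖x (k:ℤ)‖ = ‖x (k:ℤ)‖ * w ω k := mul_comm _ _
        _ ≤ C := this
        _ ≤ max C 0 := le_max_left _ _
    refine ⟨BoundedContinuousFunction.ofNormedAddCommGroup
      (fun k => w ω k • x (k : ℤ)) continuous_of_discreteTopology (max C 0) hybb, ?_⟩
    refine BoundedContinuousFunction.ext fun k => ?_
    rw [hDapp]
    simp only [BoundedContinuousFunction.coe_ofNormedAddCommGroup]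
    have hrk := hrec (k : ℤ) (Int.natCast_nonneg k)
    have hcast : ((k : ℤ) + 1) = ((k + 1 : ℕ) : ℤ) := by push_cast; ring
    rw [hcast] at hrk
    have hFval : F ((k + 1 : ℕ) : ℤ) = (w ω (k+1))⁻¹ • g k := by
      rw [hF]
      have h1 : (1:ℤ) ≤ ((k+1 : ℕ) : ℤ) := by exact_mod_cast Nat.succ_le_succ (Nat.zero_le k)
      simp only [dif_pos h1]
      congr 1 <;> simp
    rw [hFval] at hrk
    -- hrk : x (k+1) = A k (x k) + (w ω (k+1))⁻¹ • g k
    rw [map_smul, hrk]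
    have hwk : w ω k ≠ 0 := (w_pos ω k).ne'
    have hwk1 : w ω (k+1) ≠ 0 := (w_pos ω (k+1)).ne'
    rw [smul_add, smul_smul, smul_smul]
    have e1 : w ω (k+1) * (w ω (k+1))⁻¹ = 1 := mul_inv_cancel₀ hwk1
    have e2 : w ω (k+1) / w ω k * w ω k = w ω (k+1) := by field_simp
    rw [e1, e2, one_smul]
    abel
  obtain ⟨C0, hC0pos, hpre⟩ := D.exists_preimage_norm_le hsurj
  refine ⟨max C0 1, le_max_right _ _, ?_⟩
  intro f c hc
  have hc0 : 0 ≤ c := le_trans (mul_nonneg (norm_nonneg _) (w_pos ω 0).le) (hc 0)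
  have hgb : ∀ k : ℕ, ‖w ω (k+1) • f (k+1)‖ ≤ c := by
    intro k
    rw [norm_smul, Real.norm_eq_abs, abs_of_nonneg (w_pos ω (k+1)).le, mul_comm]
    exact hc (k+1)
  set g : BoundedContinuousFunction ℕ (Ed d) := BoundedContinuousFunction.ofNormedAddCommGroup
    (fun k => w ω (k+1) • f (k+1)) continuous_of_discreteTopology c hgb with hg
  obtain ⟨y, hDy, hyle⟩ := hpre g
  have hgle : ‖g‖ ≤ c := (BoundedContinuousFunction.norm_le hc0).2 (by
    intro k; rw [hg]; simp only [BoundedContinuousFunction.coe_ofNormedAddCommGroup]; exact hgb k)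
  refine ⟨fun k => (w ω k)⁻¹ • y k, ?_, ?_⟩
  · intro k
    rw [norm_smul, Real.norm_eq_abs, abs_of_nonneg (inv_nonneg.2 (w_pos ω k).le),
      inv_mul_mul_cancel (w_pos ω k).ne']
    calc ‖y k‖ ≤ ‖y‖ := y.norm_coe_le_norm k
      _ ≤ C0 * ‖g‖ := hyle
      _ ≤ C0 * c := mul_le_mul_of_nonneg_left hgle hC0pos.le
      _ ≤ max C0 1 * c := mul_le_mul_of_nonneg_right (le_max_left _ _) hc0
  · intro k
    have hk := congrArg (fun (z : BoundedContinuousFunction ℕ (Ed d)) => z k) hDy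
    rw [hDapp] at hk
    have hgk : g k = w ω (k+1) • f (k+1) := by
      rw [hg]; simp only [BoundedContinuousFunction.coe_ofNormedAddCommGroup]
    rw [hgk] at hk
    -- hk : y (k+1) - (w(k+1)/w k) • A k (y k) = w(k+1) • f (k+1)
    have hy1 : y (k+1) = (w ω (k+1) / w ω k) • (A (k:ℤ) (y k)) + w ω (k+1) • f (k+1) := by
      rw [← hk]; abel
    show (w ω (k+1))⁻¹ • y (k+1) = _
    rw [map_smul, hy1, smul_add, smul_smul, smul_smul]
    have hwk : w ω k ≠ 0 := (w_pos ω k).ne'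
    have hwk1 : w ω (k+1) ≠ 0 := (w_pos ω (k+1)).ne'
    have e1 : (w ω (k+1))⁻¹ * (w ω (k+1) / w ω k) = (w ω k)⁻¹ := by field_simp
    have e2 : (w ω (k+1))⁻¹ * w ω (k+1) = 1 := inv_mul_cancel₀ hwk1
    rw [e1, e2, one_smul]

/-! ### The stable subspace and uniform bound on stable trajectories -/

/-- Initial vectors with weighted-bounded forward trajectory. -/
def S0 {d' : ℕ} (ω : ℝ) (A : ℤ → (Ed d' ≃L[ℝ] Ed d')) : Submodule ℝ (Ed d') where
  carrier := {v | ∃ c : ℝ, ∀ k : ℕ, ‖Phi A (k : ℤ) 0 v‖ * w ω k ≤ c}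
  zero_mem' := ⟨0, fun k => by simp⟩
  add_mem' := by
    rintro a b ⟨ca, hca⟩ ⟨cb, hcb⟩
    refine ⟨ca + cb, fun k => ?_⟩
    have h1 : ‖Phi A (k:ℤ) 0 (a + b)‖ ≤ ‖Phi A (k:ℤ) 0 a‖ + ‖Phi A (k:ℤ) 0 b‖ := by
      rw [map_add]; exact norm_add_le _ _
    have h2 := mul_le_mul_of_nonneg_right h1 (w_pos ω k).le
    rw [add_mul] at h2
    linarith [hca k, hcb k]
  smul_mem' := by
    rintro r a ⟨ca, hca⟩
    refine ⟨|r| * ca, fun k => ?_⟩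
    rw [map_smul, norm_smul, Real.norm_eq_abs, mul_assoc]
    have h2 := mul_le_mul_of_nonneg_left (hca k) (abs_nonneg r)
    linarith

lemma exists_C0 {d : ℕ} (ω : ℝ) (A : ℤ → (Ed d ≃L[ℝ] Ed d)) :
    ∃ C0 : ℝ, 1 ≤ C0 ∧ ∀ v ∈ S0 ω A, ∀ k : ℕ, ‖Phi A (k:ℤ) 0 v‖ * w ω k ≤ C0 * ‖v‖ := by
  set g : ℕ → (↥(S0 ω A) →L[ℝ] Ed d) := fun k =>
    w ω k • (((Phi A (k:ℤ) 0 : Ed d →L[ℝ] Ed d)).comp (S0 ω A).subtypeL) with hg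
  have hpt : ∀ x : ↥(S0 ω A), ∃ C, ∀ k : ℕ, ‖g k x‖ ≤ C := by
    rintro ⟨v, cv, hcv⟩
    refine ⟨cv, fun k => ?_⟩
    rw [hg]
    simp only [ContinuousLinearMap.smul_apply, ContinuousLinearMap.coe_comp',
      Function.comp_apply, Submodule.coe_subtypeL', Submodule.coe_subtype,
      ContinuousLinearEquiv.coe_coe]
    rw [norm_smul, Real.norm_eq_abs, abs_of_nonneg (w_pos ω k).le, mul_comm]
    exact hcv k
  obtain ⟨C', hC'⟩ := banach_steinhaus hpt
  refine ⟨max C' 1, le_max_right _ _, fun v hv k => ?_⟩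
  have h1 : ‖g k ⟨v, hv⟩‖ ≤ C' * ‖v‖ := by
    have := (g k).le_opNorm ⟨v, hv⟩
    have h2 : ‖(⟨v, hv⟩ : ↥(S0 ω A))‖ = ‖v‖ := rfl
    rw [h2] at this
    exact this.trans (mul_le_mul_of_nonneg_right (hC' k) (norm_nonneg v))
  have h3 : ‖g k ⟨v, hv⟩‖ = ‖Phi A (k:ℤ) 0 v‖ * w ω k := by
    rw [hg]
    simp only [ContinuousLinearMap.smul_apply, ContinuousLinearMap.coe_comp',
      Function.comp_apply, Submodule.coe_subtypeL', Submodule.coe_subtype,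
      ContinuousLinearEquiv.coe_coe]
    rw [norm_smul, Real.norm_eq_abs, abs_of_nonneg (w_pos ω k).le, mul_comm]
  rw [h3] at h1
  exact h1.trans (mul_le_mul_of_nonneg_right (le_max_left _ _) (norm_nonneg v))

lemma homog_traj {d : ℕ} (A : ℤ → (Ed d ≃L[ℝ] Ed d)) (δ : ℕ → Ed d)
    (hδ : ∀ k : ℕ, δ (k+1) = A (k:ℤ) (δ k)) : ∀ k : ℕ, δ k = Phi A (k:ℤ) 0 (δ 0) := by
  intro k
  induction k with
  | zero => rw [Nat.cast_zero, phi_self]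
  | succ n ih =>
    have hc : ((n+1 : ℕ) : ℤ) = (n : ℤ) + 1 := by push_cast; ring
    rw [hδ n, ih, hc, phi_step]

/-- Any two weighted-bounded solutions with the same input differ by a bounded
homogeneous solution, controlled by the `S0` constant. -/
lemma delta_est {d : ℕ} {ω : ℝ} {A : ℤ → (Ed d ≃L[ℝ] Ed d)} {C0 : ℝ}
    (hC0b : ∀ v ∈ S0 ω A, ∀ k : ℕ, ‖Phi A (k:ℤ) 0 v‖ * w ω k ≤ C0 * ‖v‖)
    (x y f : ℕ → Ed d)
    (hx : ∀ k : ℕ, x (k+1) = A (k:ℤ) (x k) + f (k+1))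
    (hy : ∀ k : ℕ, y (k+1) = A (k:ℤ) (y k) + f (k+1))
    (hbdd : ∃ c, ∀ k : ℕ, ‖y k - x k‖ * w ω k ≤ c) :
    ∀ k : ℕ, ‖y k - x k‖ * w ω k ≤ C0 * ‖y 0 - x 0‖ := by
  have hδ : ∀ k : ℕ, (y (k+1) - x (k+1)) = A (k:ℤ) (y k - x k) := by
    intro k
    rw [hx k, hy k, map_sub]
    abel
  have htr : ∀ k : ℕ, y k - x k = Phi A (k:ℤ) 0 (y 0 - x 0) :=
    fun k => homog_traj A (fun k => y k - x k) hδ k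
  have hmem : (y 0 - x 0) ∈ S0 ω A := by
    obtain ⟨c, hc⟩ := hbdd
    exact ⟨c, fun k => by rw [← htr k]; exact hc k⟩
  intro k
  rw [htr k]
  exact hC0b _ hmem k

lemma delta_mem {d : ℕ} {ω : ℝ} {A : ℤ → (Ed d ≃L[ℝ] Ed d)}
    (x y f : ℕ → Ed d)
    (hx : ∀ k : ℕ, x (k+1) = A (k:ℤ) (x k) + f (k+1))
    (hy : ∀ k : ℕ, y (k+1) = A (k:ℤ) (y k) + f (k+1))
    (hbdd : ∃ c, ∀ k : ℕ, ‖y k - x k‖ * w ω k ≤ c) :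
    (y 0 - x 0) ∈ S0 ω A := by
  have hδ : ∀ k : ℕ, (y (k+1) - x (k+1)) = A (k:ℤ) (y k - x k) := by
    intro k
    rw [hx k, hy k, map_sub]
    abel
  have htr : ∀ k : ℕ, y k - x k = Phi A (k:ℤ) 0 (y 0 - x 0) :=
    fun k => homog_traj A (fun k => y k - x k) hδ k
  obtain ⟨c, hc⟩ := hbdd
  exact ⟨c, fun k => by rw [← htr k]; exact hc k⟩

lemma sum_Icc_bot {M : Type*} [AddCommMonoid M] {a b : ℕ} (h : a ≤ b) (g : ℕ → M) :
    ∑ j ∈ Finset.Icc a b, g j = g a + ∑ j ∈ Finset.Icc (a+1) b, g j := by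
  rw [Finset.Icc_eq_cons_Ioc h, Finset.sum_cons]
  congr 1
  rw [← Finset.Icc_add_one_left_eq_Ioc]

/-! ### Geometric decay/growth from summation inequalities -/

lemma geom_sum_decay (r : ℕ → ℝ) (hr : ∀ j, 0 < r j) (n : ℕ) (C : ℝ) (hC : 1 < C)
    (h : ∀ m : ℕ, n < m → (∑ j ∈ Finset.Icc (n+1) m, (r j)⁻¹) * r m ≤ C) :
    ∀ t : ℕ, r (n+1+t) ≤ C * ((1 - 1/C)^t * r (n+1)) := by
  have hCpos : 0 < C := lt_trans one_pos hC
  obtain ⟨μ, hμdef⟩ : ∃ μ : ℝ, μ = 1 - 1/C := ⟨_, rfl⟩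
  have hμ0 : 0 < μ := by
    have h1 : 1/C < 1 := by rw [div_lt_one hCpos]; exact hC
    rw [hμdef]
    linarith
  set G : ℕ → ℝ := fun m => ∑ j ∈ Finset.Icc (n+1) m, (r j)⁻¹ with hGdef
  have hGpos : ∀ t : ℕ, 0 < G (n+1+t) := by
    intro t
    apply Finset.sum_pos (fun j _ => inv_pos.2 (hr j))
    exact ⟨n+1, Finset.mem_Icc.2 ⟨le_rfl, by omega⟩⟩
  have hstep : ∀ m : ℕ, n < m → G m ≤ μ * G (m+1) := by
    intro m hm
    have hsum : G (m+1) = G m + (r (m+1))⁻¹ := by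
      rw [hGdef]
      exact Finset.sum_Icc_succ_top (by omega) _
    have hb := h (m+1) (by omega)
    have h2 : G (m+1) ≤ C * (r (m+1))⁻¹ := by
      rw [← le_div_iff₀ (hr (m+1))] at hb
      rw [div_eq_mul_inv] at hb
      exact hb
    have h4 : G (m+1) / C ≤ (r (m+1))⁻¹ := by
      rw [div_le_iff₀ hCpos, mul_comm]
      exact h2
    have h5 : μ * G (m+1) = G (m+1) - G (m+1)/C := by
      rw [hμdef]; ring
    calc G m = G (m+1) - (r (m+1))⁻¹ := by linarith [hsum]
      _ ≤ G (m+1) - G (m+1)/C := by linarith [h4]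
      _ = μ * G (m+1) := h5.symm
  have hGgrow : ∀ t : ℕ, G (n+1) ≤ μ^t * G (n+1+t) := by
    intro t
    induction t with
    | zero => simp
    | succ s ih =>
      have h6 := hstep (n+1+s) (by omega)
      have h7 : n+1+s+1 = n+1+(s+1) := by omega
      rw [h7] at h6
      calc G (n+1) ≤ μ^s * G (n+1+s) := ih
        _ ≤ μ^s * (μ * G (n+1+(s+1))) := mul_le_mul_of_nonneg_left h6 (pow_nonneg hμ0.le s)
        _ = μ^(s+1) * G (n+1+(s+1)) := by ring
  intro t
  have hb := h (n+1+t) (by omega)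
  have hGsingle : G (n+1) = (r (n+1))⁻¹ := by
    rw [hGdef]
    simp
  have h3 : r (n+1+t) ≤ C / G (n+1+t) := by
    rw [le_div_iff₀ (hGpos t), mul_comm]
    exact hb
  have h5 : 1 ≤ μ^t * G (n+1+t) * r (n+1) := by
    have h6 := mul_le_mul_of_nonneg_right (hGsingle ▸ hGgrow t) (hr (n+1)).le
    rw [inv_mul_cancel₀ (hr (n+1)).ne'] at h6
    exact h6
  have h6 : C ≤ (C * ((1 - 1/C)^t * r (n+1))) * G (n+1+t) := by
    rw [← hμdef]
    calc C = C * 1 := (mul_one C).symm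
      _ ≤ C * (μ^t * G (n+1+t) * r (n+1)) := mul_le_mul_of_nonneg_left h5 hCpos.le
      _ = (C * (μ^t * r (n+1))) * G (n+1+t) := by ring
  exact h3.trans ((div_le_iff₀ (hGpos t)).2 h6)

lemma geom_sum_grow (r : ℕ → ℝ) (hr : ∀ j, 0 < r j) (m : ℕ) (C : ℝ) (hC : 1 ≤ C)
    (h : ∀ k : ℕ, k < m → r k * (∑ j ∈ Finset.Icc (k+1) m, (r j)⁻¹) ≤ C) :
    ∀ n t : ℕ, n + t = m → r n ≤ (C+1) * ((C/(C+1))^t * r m) := by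
  have hCpos : 0 < C := lt_of_lt_of_le one_pos hC
  have hC1pos : (0:ℝ) < C + 1 := by linarith
  obtain ⟨q, hqdef⟩ : ∃ q : ℝ, q = 1 + 1/C := ⟨_, rfl⟩
  have hq1 : 0 < q := by rw [hqdef]; positivity
  have hqinv : q⁻¹ = C/(C+1) := by
    rw [hqdef]
    field_simp
  set H : ℕ → ℝ := fun k => ∑ j ∈ Finset.Icc (k+1) m, (r j)⁻¹ with hHdef
  have hsplit : ∀ k : ℕ, k + 1 ≤ m → H k = (r (k+1))⁻¹ + H (k+1) := by
    intro k hk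
    rw [hHdef]
    simp only
    rw [Finset.Icc_eq_cons_Ioc hk, Finset.sum_cons]
    congr 1
    rw [← Finset.Icc_add_one_left_eq_Ioc]
  have haux : ∀ t : ℕ, ∀ n : ℕ, n + t + 1 = m → q^t * (r m)⁻¹ ≤ H n := by
    intro t
    induction t with
    | zero =>
      intro n hn
      have : H n = (r m)⁻¹ + H m := by
        have h0 := hsplit n (by omega)
        rw [show n + 1 = m by omega] at h0
        exact h0
      rw [this]
      have hHm : H m = 0 := by
        rw [hHdef]
        simp only
        rw [Finset.Icc_eq_empty (by omega), Finset.sum_empty]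
      rw [hHm]
      simp
    | succ s ih =>
      intro n hn
      have h1 := hsplit n (by omega)
      have h2 := ih (n+1) (by omega)
      have h3 := h (n+1) (by omega)
      -- r (n+1) * H (n+1) ≤ C  ⇒  (r (n+1))⁻¹ ≥ H (n+1) / C
      have h3' : H (n+1) ≤ C / r (n+1) := (le_div_iff₀ (hr (n+1))).2 (by
        rw [mul_comm]; exact h3)
      have h4 : H (n+1) / C ≤ (r (n+1))⁻¹ := by
        rw [div_le_iff₀ hCpos]
        calc H (n+1) ≤ C / r (n+1) := h3'
          _ = (r (n+1))⁻¹ * C := by rw [div_eq_mul_inv, mul_comm]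
      have h5 : q * H (n+1) = H (n+1) + H (n+1)/C := by
        rw [hqdef]; ring
      have h6 : q * (q^s * (r m)⁻¹) ≤ q * H (n+1) := mul_le_mul_of_nonneg_left h2 hq1.le
      calc q^(s+1) * (r m)⁻¹ = q * (q^s * (r m)⁻¹) := by ring
        _ ≤ q * H (n+1) := h6
        _ = H (n+1) + H (n+1)/C := h5
        _ ≤ (r (n+1))⁻¹ + H (n+1) := by linarith
        _ = H n := h1.symm
  intro n t hnt
  rcases t with _ | s
  · -- t = 0, n = m
    have : n = m := by omega
    subst this
    have : (1:ℝ) ≤ C + 1 := by linarith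
    nlinarith [hr n]
  · have h1 := haux s n (by omega)
    have h2 := h n (by omega)
    have hHpos : 0 < H n := by
      apply Finset.sum_pos (fun j _ => inv_pos.2 (hr j))
      exact ⟨m, Finset.mem_Icc.2 ⟨by omega, le_rfl⟩⟩
    have h3 : r n ≤ C / H n := by
      rw [le_div_iff₀ hHpos]
      exact h2
    have hqpow : 0 < q^s * (r m)⁻¹ := mul_pos (pow_pos hq1 s) (inv_pos.2 (hr m))
    have h4 : C / H n ≤ C / (q^s * (r m)⁻¹) :=
      div_le_div_of_nonneg_left hCpos.le hqpow h1
    have h5 : C / (q^s * (r m)⁻¹) = (C+1) * ((C/(C+1))^(s+1) * r m) := by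
      rw [div_eq_mul_inv, mul_inv, inv_inv, ← inv_pow, hqinv]
      have hx : (C+1) * (C/(C+1)) = C := mul_div_cancel₀ C hC1pos.ne'
      rw [pow_succ]
      linear_combination (-((C/(C+1))^s * r m)) * hx
    have h6 := h3.trans h4
    rw [h5] at h6
    exact h6

/-- Absorption of a polynomial factor into a geometric one. -/
lemma poly_absorb {ω lam : ℝ} (hω : 0 ≤ ω) (h0 : 0 < lam) (h1 : lam < 1) :
    ∃ lam' B : ℝ, 0 < lam' ∧ lam' < 1 ∧ 1 ≤ B ∧
      ∀ t : ℕ, ((t:ℝ)+1)^ω * lam^t ≤ B * lam'^t := by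
  set lam' : ℝ := (1 + lam)/2 with hl'
  have hl'0 : 0 < lam' := by rw [hl']; linarith
  have hl'1 : lam' < 1 := by rw [hl']; linarith
  have hlam_lt : lam < lam' := by rw [hl']; linarith
  set q : ℝ := lam / lam' with hq
  have hq0 : 0 < q := div_pos h0 hl'0
  have hq1 : q < 1 := (div_lt_one hl'0).2 hlam_lt
  set N : ℕ := ⌈ω⌉₊ with hN
  have hsum : Summable (fun n : ℕ => (n:ℝ)^N * q^n) :=
    summable_pow_mul_geometric_of_norm_lt_one N (by rw [Real.norm_eq_abs, abs_of_pos hq0]; exact hq1)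
  set T : ℝ := ∑' n : ℕ, (n:ℝ)^N * q^n with hT
  have hterm : ∀ t : ℕ, ((t:ℝ)+1)^N * q^(t+1) ≤ T := by
    intro t
    have := Summable.le_tsum hsum (t+1) (fun j _ => by positivity)
    simpa using this
  refine ⟨lam', max 1 (T/q), hl'0, hl'1, le_max_left _ _, fun t => ?_⟩
  have e1 : ((t:ℝ)+1)^ω ≤ ((t:ℝ)+1)^(N:ℝ) :=
    Real.rpow_le_rpow_of_exponent_le (by push_cast; linarith [Nat.cast_nonneg (α := ℝ) t])
      (Nat.le_ceil ω)
  have e2 : ((t:ℝ)+1)^(N:ℝ) = ((t:ℝ)+1)^N := Real.rpow_natCast _ N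
  have e3 : ((t:ℝ)+1)^N * q^t ≤ T/q := by
    rw [le_div_iff₀ hq0]
    calc ((t:ℝ)+1)^N * q^t * q = ((t:ℝ)+1)^N * q^(t+1) := by ring
      _ ≤ T := hterm t
  have e4 : lam^t = q^t * lam'^t := by
    rw [hq, div_pow, div_mul_cancel₀]
    exact (pow_pos hl'0 t).ne'
  calc ((t:ℝ)+1)^ω * lam^t = (((t:ℝ)+1)^ω * q^t) * lam'^t := by rw [e4]; ring
    _ ≤ (T/q) * lam'^t := by
        apply mul_le_mul_of_nonneg_right _ (pow_nonneg hl'0.le t)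
        calc ((t:ℝ)+1)^ω * q^t ≤ ((t:ℝ)+1)^N * q^t := by
              apply mul_le_mul_of_nonneg_right _ (pow_nonneg hq0.le t)
              rw [← e2]; exact e1
          _ ≤ T/q := e3
    _ ≤ max 1 (T/q) * lam'^t :=
        mul_le_mul_of_nonneg_right (le_max_right _ _) (pow_nonneg hl'0.le t)

/-! ### The stable estimate -/

lemma stable_est {d : ℕ} {ω M L C0 : ℝ} {A : ℤ → (Ed d ≃L[ℝ] Ed d)}
    (hω : 0 ≤ ω) (hM : 0 < M)
    (hA : ∀ k : ℤ, 0 ≤ k → ‖(A k : Ed d →L[ℝ] Ed d)‖ ≤ M ∧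
      ‖((A k).symm : Ed d →L[ℝ] Ed d)‖ ≤ M)
    (hL : 1 ≤ L) (hadm : ADMprop ω A L) (hC0 : 1 ≤ C0)
    (hC0b : ∀ v ∈ S0 ω A, ∀ k : ℕ, ‖Phi A (k:ℤ) 0 v‖ * w ω k ≤ C0 * ‖v‖) :
    ∃ Ks mu : ℝ, 1 ≤ Ks ∧ 0 < mu ∧ mu < 1 ∧
      ∀ v ∈ S0 ω A, ∀ n t : ℕ,
        ‖Phi A ((n+t : ℕ) : ℤ) 0 v‖ ≤ Ks * mu^t * ‖Phi A (n:ℤ) 0 v‖ := by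
  have hAb := norm_A_apply_le hA
  set ρ : ℝ := 2 ^ ω with hρdef
  have hρ : 0 < ρ := Real.rpow_pos_of_pos (by norm_num) ω
  have hρ1 : 1 ≤ ρ := Real.one_le_rpow (by norm_num) hω
  set C : ℝ := L * (1 + C0) + 1 with hCdef
  have hC : 1 < C := by nlinarith
  have hCpos : 0 < C := lt_trans one_pos hC
  set mu : ℝ := 1 - 1/C with hmudef
  have hmu0 : 0 < mu := by
    have h1 : 1/C < 1 := by rw [div_lt_one hCpos]; exact hC
    rw [hmudef]; linarith
  have hmu1 : mu < 1 := by
    have h1 : 0 < 1/C := by positivity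
    rw [hmudef]; linarith
  set Ks : ℝ := 1 + C * ρ * M / mu with hKs
  have hKs1 : 1 ≤ Ks := by
    have : 0 ≤ C * ρ * M / mu := by positivity
    rw [hKs]; linarith
  refine ⟨Ks, mu, hKs1, hmu0, hmu1, ?_⟩
  intro v hv n t
  by_cases hv0 : v = 0
  · subst hv0
    simp only [map_zero, norm_zero, mul_zero, le_refl]
  set z : ℕ → Ed d := fun k => Phi A (k:ℤ) 0 v with hz
  have hzne : ∀ k, z k ≠ 0 := by
    intro k hk0
    apply hv0
    have := congrArg (Phi A (k:ℤ) 0).symm hk0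
    rwa [ContinuousLinearEquiv.symm_apply_apply, map_zero] at this
  set r : ℕ → ℝ := fun k => ‖z k‖ * w ω k with hr
  have hrpos : ∀ k, 0 < r k := fun k =>
    mul_pos (norm_pos_iff.2 (hzne k)) (w_pos ω k)
  obtain ⟨cv, hcv⟩ := hv
  have hcv' : ∀ k : ℕ, r k ≤ cv := fun k => hcv k
  have hzstep : ∀ k : ℕ, z (k+1) = A (k:ℤ) (z k) := by
    intro k
    rw [hz]
    simp only
    have hc : ((k+1 : ℕ) : ℤ) = (k:ℤ) + 1 := by push_cast; ring
    rw [hc, phi_step]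
  -- the key summation inequality
  have key : ∀ m : ℕ, n < m → (∑ j ∈ Finset.Icc (n+1) m, (r j)⁻¹) * r m ≤ C := by
    intro m hm
    set f : ℕ → Ed d := fun j => if j ∈ Finset.Icc (n+1) m then (r j)⁻¹ • z j else 0 with hf
    have hfb : ∀ j, ‖f j‖ * w ω j ≤ 1 := by
      intro j
      rw [hf]
      by_cases hj : j ∈ Finset.Icc (n+1) m
      · simp only [if_pos hj]
        rw [norm_smul, Real.norm_eq_abs, abs_of_nonneg (inv_nonneg.2 (hrpos j).le), mul_assoc]
        rw [inv_mul_le_iff₀ (hrpos j), mul_one]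
      · simp only [if_neg hj, norm_zero, zero_mul, zero_le_one]
    obtain ⟨x, hxb, hxrec⟩ := hadm f 1 hfb
    set G : ℕ → ℝ := fun k => ∑ j ∈ Finset.Icc (n+1) (min k m), (r j)⁻¹ with hG
    set xt : ℕ → Ed d := fun k => G k • z k with hxt
    have hGnn : ∀ k, 0 ≤ G k := fun k =>
      Finset.sum_nonneg (fun j _ => (inv_nonneg.2 (hrpos j).le))
    set Gm : ℝ := ∑ j ∈ Finset.Icc (n+1) m, (r j)⁻¹ with hGm
    have hGle : ∀ k, G k ≤ Gm := by
      intro k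
      apply Finset.sum_le_sum_of_subset_of_nonneg
      · exact Finset.Icc_subset_Icc_right (min_le_right _ _)
      · intro j _ _
        exact inv_nonneg.2 (hrpos j).le
    have hGmEq : G m = Gm := by rw [hG, hGm]; simp
    have hGstep : ∀ k : ℕ,
        G (k+1) = G k + (if (k+1) ∈ Finset.Icc (n+1) m then (r (k+1))⁻¹ else 0) := by
      intro k
      rcases le_or_gt (k+1) m with hkm | hkm
      · have hmin1 : min (k+1) m = k+1 := min_eq_left hkm
        have hmin2 : min k m = k := min_eq_left (by omega)
        rw [hG]
        simp only [hmin1, hmin2]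
        by_cases hk1 : n+1 ≤ k+1
        · rw [if_pos (Finset.mem_Icc.2 ⟨hk1, hkm⟩)]
          exact Finset.sum_Icc_succ_top (by omega) _
        · rw [if_neg (fun hmem => hk1 (Finset.mem_Icc.1 hmem).1)]
          rw [Finset.Icc_eq_empty (by omega), Finset.Icc_eq_empty (by omega)]
          simp
      · have hmin1 : min (k+1) m = m := min_eq_right (by omega)
        have hmin2 : min k m = m := min_eq_right (by omega)
        rw [hG]
        simp only [hmin1, hmin2]
        rw [if_neg (fun hmem => by have := (Finset.mem_Icc.1 hmem).2; omega)]
        simp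
    have hxtrec : ∀ k : ℕ, xt (k+1) = A (k:ℤ) (xt k) + f (k+1) := by
      intro k
      rw [hxt]
      simp only
      rw [hGstep k, map_smul, ← hzstep k, add_smul]
      congr 1
      rw [hf]
      by_cases hmem : (k+1) ∈ Finset.Icc (n+1) m
      · simp only [if_pos hmem]
      · simp only [if_neg hmem, zero_smul]
    have hxtb : ∀ k, ‖xt k‖ * w ω k ≤ Gm * cv := by
      intro k
      rw [hxt]
      simp only
      rw [norm_smul, Real.norm_eq_abs, abs_of_nonneg (hGnn k), mul_assoc]
      have h1 : ‖z k‖ * w ω k ≤ cv := hcv' k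
      have h2 : 0 ≤ ‖z k‖ * w ω k := mul_nonneg (norm_nonneg _) (w_pos ω k).le
      exact mul_le_mul (hGle k) h1 h2 (le_trans (hGnn 0) (hGle 0))
    have hδ : ∀ k, ‖xt k - x k‖ * w ω k ≤ C0 * ‖xt 0 - x 0‖ := by
      apply delta_est hC0b x xt f hxrec hxtrec
      refine ⟨Gm * cv + L * 1, fun k => ?_⟩
      calc ‖xt k - x k‖ * w ω k ≤ (‖xt k‖ + ‖x k‖) * w ω k :=
            mul_le_mul_of_nonneg_right (norm_sub_le _ _) (w_pos ω k).le
        _ = ‖xt k‖ * w ω k + ‖x k‖ * w ω k := by ring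
        _ ≤ Gm * cv + L * 1 := add_le_add (hxtb k) (hxb k)
    have hxt0 : xt 0 = 0 := by
      rw [hxt]
      simp only
      have : G 0 = 0 := by
        rw [hG]
        simp only [min_eq_left (Nat.zero_le m)]
        rw [Finset.Icc_eq_empty (by omega), Finset.sum_empty]
      rw [this, zero_smul]
    have hx0 : ‖xt 0 - x 0‖ ≤ L := by
      rw [hxt0, zero_sub, norm_neg]
      have := hxb 0
      rwa [w_zero, mul_one, mul_one] at this
    have hfinal : Gm * r m ≤ L + C0 * L := by
      have h1 : ‖xt m‖ = Gm * ‖z m‖ := by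
        rw [hxt]
        simp only
        rw [norm_smul, Real.norm_eq_abs, abs_of_nonneg (hGnn m), hGmEq]
      have h2 : ‖xt m‖ ≤ ‖xt m - x m‖ + ‖x m‖ := by
        calc ‖xt m‖ = ‖(xt m - x m) + x m‖ := by rw [sub_add_cancel]
          _ ≤ ‖xt m - x m‖ + ‖x m‖ := norm_add_le _ _
      have h3 : ‖xt m‖ * w ω m ≤ (‖xt m - x m‖ + ‖x m‖) * w ω m :=
        mul_le_mul_of_nonneg_right h2 (w_pos ω m).le
      have h4 : ‖xt m - x m‖ * w ω m ≤ C0 * L := by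
        calc ‖xt m - x m‖ * w ω m ≤ C0 * ‖xt 0 - x 0‖ := hδ m
          _ ≤ C0 * L := mul_le_mul_of_nonneg_left hx0 (by linarith)
      have h5 : ‖x m‖ * w ω m ≤ L := by have := hxb m; linarith
      calc Gm * r m = ‖xt m‖ * w ω m := by rw [h1, hr]; ring
        _ ≤ ‖xt m - x m‖ * w ω m + ‖x m‖ * w ω m := by rw [add_mul] at h3; exact h3
        _ ≤ C0 * L + L := add_le_add h4 h5
        _ = L + C0 * L := by ring
    calc (∑ j ∈ Finset.Icc (n+1) m, (r j)⁻¹) * r m = Gm * r m := by rw [hGm]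
      _ ≤ L + C0 * L := hfinal
      _ ≤ C := by rw [hCdef]; nlinarith
  -- now apply the geometric lemma
  rcases t with _ | t'
  · -- t = 0
    have h1 : 1 * ‖z n‖ ≤ Ks * ‖z n‖ :=
      mul_le_mul_of_nonneg_right hKs1 (norm_nonneg _)
    simpa [pow_zero, Nat.add_zero] using (by rw [one_mul] at h1; simpa using h1 : ‖z n‖ ≤ Ks * ‖z n‖)
  · have hgeo := geom_sum_decay r hrpos n C hC key t'
    rw [← hmudef] at hgeo
    have heq : n + (t'+1) = n+1+t' := by omega
    have hr1 : r (n+1) ≤ ρ * M * r n := by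
      rw [hr]
      simp only
      have h1 : ‖z (n+1)‖ ≤ M * ‖z n‖ := by rw [hzstep n]; exact hAb n (z n)
      have h2 : w ω (n+1) ≤ ρ * w ω n := w_succ_le hω n
      calc ‖z (n+1)‖ * w ω (n+1) ≤ (M * ‖z n‖) * (ρ * w ω n) := by
            apply mul_le_mul h1 h2 (w_pos ω (n+1)).le
            positivity
        _ = ρ * M * (‖z n‖ * w ω n) := by ring
    have hwmono : w ω n ≤ w ω (n+1+t') := w_mono hω (by omega)
    have hfin : r (n+1+t') ≤ C * mu^t' * (ρ * M * r n) := by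
      calc r (n+1+t') ≤ C * (mu^t' * r (n+1)) := hgeo
        _ ≤ C * (mu^t' * (ρ * M * r n)) := by
            apply mul_le_mul_of_nonneg_left _ hCpos.le
            exact mul_le_mul_of_nonneg_left hr1 (pow_nonneg hmu0.le t')
        _ = C * mu^t' * (ρ * M * r n) := by ring
    -- convert to unweighted norms
    have hnorm : ‖z (n+1+t')‖ * w ω n ≤ ‖z (n+1+t')‖ * w ω (n+1+t') :=
      mul_le_mul_of_nonneg_left hwmono (norm_nonneg _)
    have h6 : ‖z (n+1+t')‖ * w ω n ≤ C * mu^t' * ρ * M * (‖z n‖ * w ω n) := by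
      calc ‖z (n+1+t')‖ * w ω n ≤ r (n+1+t') := hnorm
        _ ≤ C * mu^t' * (ρ * M * r n) := hfin
        _ = C * mu^t' * ρ * M * (‖z n‖ * w ω n) := by rw [hr]; ring
    have h7 : ‖z (n+1+t')‖ ≤ C * mu^t' * ρ * M * ‖z n‖ := by
      have hw := w_pos ω n
      nlinarith [h6, norm_nonneg (z (n+1+t')), norm_nonneg (z n)]
    have h8 : C * mu^t' * ρ * M ≤ Ks * mu^(t'+1) := by
      have e1 : C * ρ * M / mu * mu^(t'+1) = C * mu^t' * ρ * M := by
        field_simp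
        ring
      have e2 : C * ρ * M / mu ≤ Ks := by rw [hKs]; linarith [le_refl (C * ρ * M / mu)]
      calc C * mu^t' * ρ * M = C * ρ * M / mu * mu^(t'+1) := e1.symm
        _ ≤ Ks * mu^(t'+1) := mul_le_mul_of_nonneg_right e2 (pow_nonneg hmu0.le (t'+1))
    calc ‖Phi A ((n+(t'+1) : ℕ) : ℤ) 0 v‖ = ‖z (n+1+t')‖ := by rw [hz]; simp only; rw [heq]
      _ ≤ C * mu^t' * ρ * M * ‖z n‖ := h7
      _ ≤ Ks * mu^(t'+1) * ‖z n‖ :=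
          mul_le_mul_of_nonneg_right h8 (norm_nonneg _)

/-! ### The unstable estimate -/

set_option maxHeartbeats 1000000 in
lemma unstable_est {d : ℕ} {ω M L C0 : ℝ} {A : ℤ → (Ed d ≃L[ℝ] Ed d)}
    (hω : 0 ≤ ω) (hM : 0 < M)
    (hA : ∀ k : ℤ, 0 ≤ k → ‖(A k : Ed d →L[ℝ] Ed d)‖ ≤ M ∧
      ‖((A k).symm : Ed d →L[ℝ] Ed d)‖ ≤ M)
    (hL : 1 ≤ L) (hadm : ADMprop ω A L) (hC0 : 1 ≤ C0)
    (hC0b : ∀ v ∈ S0 ω A, ∀ k : ℕ, ‖Phi A (k:ℤ) 0 v‖ * w ω k ≤ C0 * ‖v‖)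
    (U0 : Submodule ℝ (Ed d)) (πc : Ed d →L[ℝ] Ed d) (cπ : ℝ) (hcπ : 0 ≤ cπ)
    (hπS : ∀ v ∈ S0 ω A, πc v = 0) (hπU : ∀ u ∈ U0, πc u = u)
    (hπn : ∀ v, ‖πc v‖ ≤ cπ * ‖v‖) :
    ∃ Ku lamu : ℝ, 1 ≤ Ku ∧ 0 < lamu ∧ lamu < 1 ∧
      ∀ u ∈ U0, ∀ n t : ℕ,
        ‖Phi A (n:ℤ) 0 u‖ ≤ Ku * lamu^t * ‖Phi A ((n+t : ℕ) : ℤ) 0 u‖ := by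
  have hAb := norm_A_apply_le hA
  set C4 : ℝ := L * (1 + C0 * (1 + cπ)) + 1 with hC4def
  have hC4 : 1 ≤ C4 := by
    have h1 : (0:ℝ) ≤ 1 + C0 * (1 + cπ) := by nlinarith
    have h2 : (0:ℝ) ≤ L * (1 + C0 * (1 + cπ)) := mul_nonneg (by linarith) h1
    rw [hC4def]; linarith
  have hC4pos : 0 < C4 := lt_of_lt_of_le one_pos hC4
  have hC41pos : (0:ℝ) < C4 + 1 := by linarith
  set lam : ℝ := C4/(C4+1) with hlam
  have hlam0 : 0 < lam := div_pos hC4pos hC41pos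
  have hlam1 : lam < 1 := by rw [hlam, div_lt_one hC41pos]; linarith
  obtain ⟨lam', B, hlam'0, hlam'1, hB1, hpoly⟩ := poly_absorb hω hlam0 hlam1
  refine ⟨(C4+1) * B, lam', by nlinarith, hlam'0, hlam'1, ?_⟩
  intro u hu n t
  by_cases hu0 : u = 0
  · subst hu0
    simp only [map_zero, norm_zero, mul_zero, le_refl]
  set z : ℕ → Ed d := fun k => Phi A (k:ℤ) 0 u with hz
  have hzne : ∀ k, z k ≠ 0 := by
    intro k hk0
    apply hu0
    have := congrArg (Phi A (k:ℤ) 0).symm hk0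
    rwa [ContinuousLinearEquiv.symm_apply_apply, map_zero] at this
  set r : ℕ → ℝ := fun k => ‖z k‖ * w ω k with hr
  have hrpos : ∀ k, 0 < r k := fun k =>
    mul_pos (norm_pos_iff.2 (hzne k)) (w_pos ω k)
  have hz0 : z 0 = u := by rw [hz]; simp only [Nat.cast_zero]; exact phi_self A 0 u
  have hzstep : ∀ k : ℕ, z (k+1) = A (k:ℤ) (z k) := by
    intro k
    rw [hz]
    simp only
    have hc : ((k+1 : ℕ) : ℤ) = (k:ℤ) + 1 := by push_cast; ring
    rw [hc, phi_step]
  -- the key summation inequality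
  have key : ∀ (m k : ℕ), k < m → r k * (∑ j ∈ Finset.Icc (k+1) m, (r j)⁻¹) ≤ C4 := by
    intro m k hkm
    set f : ℕ → Ed d := fun j => if j ∈ Finset.Icc (k+1) m then (r j)⁻¹ • z j else 0 with hf
    have hfb : ∀ j, ‖f j‖ * w ω j ≤ 1 := by
      intro j
      rw [hf]
      by_cases hj : j ∈ Finset.Icc (k+1) m
      · simp only [if_pos hj]
        rw [norm_smul, Real.norm_eq_abs, abs_of_nonneg (inv_nonneg.2 (hrpos j).le), mul_assoc]
        rw [inv_mul_le_iff₀ (hrpos j), mul_one]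
      · simp only [if_neg hj, norm_zero, zero_mul, zero_le_one]
    obtain ⟨x, hxb, hxrec⟩ := hadm f 1 hfb
    set h : ℕ → ℝ := fun j => ∑ i ∈ Finset.Icc (max j k + 1) m, (r i)⁻¹ with hh
    set xh : ℕ → Ed d := fun j => (-(h j)) • z j with hxh
    have hhnn : ∀ j, 0 ≤ h j := fun j =>
      Finset.sum_nonneg (fun i _ => (inv_nonneg.2 (hrpos i).le))
    have hhstep : ∀ j : ℕ,
        h (j+1) = h j - (if (j+1) ∈ Finset.Icc (k+1) m then (r (j+1))⁻¹ else 0) := by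
      intro j
      rcases le_or_gt (j+1) k with hjk | hjk
      · have e1 : max (j+1) k = k := max_eq_right hjk
        have e2 : max j k = k := max_eq_right (by omega)
        rw [hh]
        simp only [e1, e2]
        rw [if_neg (fun hmem => by have := (Finset.mem_Icc.1 hmem).1; omega)]
        simp
      · have e1 : max (j+1) k = j+1 := max_eq_left (by omega)
        have e2 : max j k = j := max_eq_left (by omega)
        rw [hh]
        simp only [e1, e2]
        rcases le_or_gt (j+1) m with hjm | hjm
        · rw [if_pos (Finset.mem_Icc.2 ⟨by omega, hjm⟩)]
          rw [sum_Icc_bot hjm]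
          ring
        · rw [if_neg (fun hmem => by have := (Finset.mem_Icc.1 hmem).2; omega)]
          rw [Finset.Icc_eq_empty (by omega), Finset.Icc_eq_empty (by omega)]
          simp
    have hxhrec : ∀ j : ℕ, xh (j+1) = A (j:ℤ) (xh j) + f (j+1) := by
      intro j
      rw [hxh]
      simp only
      rw [hhstep j, map_smul, ← hzstep j]
      have e1 : (-(h j - (if (j+1) ∈ Finset.Icc (k+1) m then (r (j+1))⁻¹ else 0))) =
          (-(h j)) + (if (j+1) ∈ Finset.Icc (k+1) m then (r (j+1))⁻¹ else 0) := by ring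
      rw [e1, add_smul]
      congr 1
      rw [hf]
      by_cases hmem : (j+1) ∈ Finset.Icc (k+1) m
      · simp only [if_pos hmem]
      · simp only [if_neg hmem, zero_smul]
    -- boundedness of xh
    set H0 : ℝ := ∑ i ∈ Finset.Icc 1 m, (r i)⁻¹ with hH0
    have hH0nn : 0 ≤ H0 :=
      Finset.sum_nonneg (fun i _ => (inv_nonneg.2 (hrpos i).le))
    set R0 : ℝ := ∑ i ∈ Finset.range (m+1), r i with hR0
    have hR0nn : 0 ≤ R0 := Finset.sum_nonneg (fun i _ => (hrpos i).le)
    have hhle : ∀ j, h j ≤ H0 := by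
      intro j
      apply Finset.sum_le_sum_of_subset_of_nonneg
      · apply Finset.Icc_subset_Icc_left
        omega
      · intro i _ _
        exact inv_nonneg.2 (hrpos i).le
    have hxhb : ∀ j, ‖xh j‖ * w ω j ≤ H0 * R0 := by
      intro j
      rw [hxh]
      simp only
      rw [norm_smul, Real.norm_eq_abs, abs_neg, abs_of_nonneg (hhnn j), mul_assoc]
      rcases le_or_gt j m with hjm | hjm
      · have h1 : ‖z j‖ * w ω j ≤ R0 := by
          have := Finset.single_le_sum (f := r) (fun i _ => (hrpos i).le)
            (Finset.mem_range.2 (by omega : j < m+1))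
          rw [hR0]
          exact this
        exact mul_le_mul (hhle j) h1
          (mul_nonneg (norm_nonneg _) (w_pos ω j).le) hH0nn
      · have h2 : h j = 0 := by
          rw [hh]
          simp only
          rw [Finset.Icc_eq_empty (by omega), Finset.sum_empty]
        rw [h2, zero_mul]
        exact mul_nonneg hH0nn hR0nn
    have hbdd : ∃ c, ∀ j : ℕ, ‖xh j - x j‖ * w ω j ≤ c := by
      refine ⟨H0 * R0 + L * 1, fun j => ?_⟩
      calc ‖xh j - x j‖ * w ω j ≤ (‖xh j‖ + ‖x j‖) * w ω j :=
            mul_le_mul_of_nonneg_right (norm_sub_le _ _) (w_pos ω j).le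
        _ = ‖xh j‖ * w ω j + ‖x j‖ * w ω j := by ring
        _ ≤ H0 * R0 + L * 1 := add_le_add (hxhb j) (hxb j)
    have hδ := delta_est hC0b x xh f hxrec hxhrec hbdd
    have hδ0mem := delta_mem x xh f hxrec hxhrec hbdd
    -- value at 0
    set g : ℝ := ∑ j ∈ Finset.Icc (k+1) m, (r j)⁻¹ with hg
    have hgnn : 0 ≤ g :=
      Finset.sum_nonneg (fun i _ => (inv_nonneg.2 (hrpos i).le))
    have hh0 : h 0 = g := by
      rw [hh, hg]
      simp only
      congr 2
    have hxh0 : xh 0 = (-g) • u := by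
      rw [hxh]
      simp only
      rw [hh0, hz0]
    have hx0le : ‖x 0‖ ≤ L := by
      have := hxb 0
      rwa [w_zero, mul_one, mul_one] at this
    -- the projection step
    have hπδ : πc (xh 0 - x 0) = 0 := hπS _ hδ0mem
    have hgu : g • u = -(πc (x 0)) := by
      have h1 : πc (xh 0) - πc (x 0) = 0 := by rw [← map_sub]; exact hπδ
      have h2 : πc (xh 0) = (-g) • u := by
        rw [hxh0, map_smul, hπU u hu]
      rw [h2] at h1
      have : (-g) • u = πc (x 0) := by
        have := sub_eq_zero.1 h1
        exact this
      rw [← this, neg_smul, neg_neg]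
    have hgub : g * ‖u‖ ≤ cπ * L := by
      have h1 : ‖g • u‖ = ‖πc (x 0)‖ := by rw [hgu, norm_neg]
      rw [norm_smul, Real.norm_eq_abs, abs_of_nonneg hgnn] at h1
      calc g * ‖u‖ = ‖πc (x 0)‖ := h1
        _ ≤ cπ * ‖x 0‖ := hπn (x 0)
        _ ≤ cπ * L := mul_le_mul_of_nonneg_left hx0le hcπ
    have hδ0b : ‖xh 0 - x 0‖ ≤ cπ * L + L := by
      calc ‖xh 0 - x 0‖ ≤ ‖xh 0‖ + ‖x 0‖ := norm_sub_le _ _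
        _ ≤ cπ * L + L := by
            apply add_le_add _ hx0le
            rw [hxh0, norm_smul, Real.norm_eq_abs, abs_neg, abs_of_nonneg hgnn]
            have : ‖u‖ = ‖z 0‖ := by rw [hz0]
            exact hgub
    -- value at k
    have hhk : h k = g := by
      rw [hh, hg]
      simp only [max_self]
    have hxhk : ‖xh k‖ = g * ‖z k‖ := by
      rw [hxh]
      simp only
      rw [norm_smul, Real.norm_eq_abs, abs_neg, abs_of_nonneg (hhnn k), hhk]
    have hfinal : g * r k ≤ C4 := by
      have h2 : ‖xh k‖ ≤ ‖xh k - x k‖ + ‖x k‖ := by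
        calc ‖xh k‖ = ‖(xh k - x k) + x k‖ := by rw [sub_add_cancel]
          _ ≤ ‖xh k - x k‖ + ‖x k‖ := norm_add_le _ _
      have h3 : ‖xh k‖ * w ω k ≤ (‖xh k - x k‖ + ‖x k‖) * w ω k :=
        mul_le_mul_of_nonneg_right h2 (w_pos ω k).le
      have h4 : ‖xh k - x k‖ * w ω k ≤ C0 * (cπ * L + L) := by
        calc ‖xh k - x k‖ * w ω k ≤ C0 * ‖xh 0 - x 0‖ := hδ k
          _ ≤ C0 * (cπ * L + L) := mul_le_mul_of_nonneg_left hδ0b (by linarith)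
      have h5 : ‖x k‖ * w ω k ≤ L := by have := hxb k; linarith
      calc g * r k = ‖xh k‖ * w ω k := by rw [hxhk, hr]; ring
        _ ≤ ‖xh k - x k‖ * w ω k + ‖x k‖ * w ω k := by rw [add_mul] at h3; exact h3
        _ ≤ C0 * (cπ * L + L) + L := add_le_add h4 h5
        _ ≤ C4 := by rw [hC4def]; ring_nf; nlinarith [hL, hC0, hcπ]
    calc r k * (∑ j ∈ Finset.Icc (k+1) m, (r j)⁻¹) = g * r k := by rw [hg]; ring
      _ ≤ C4 := hfinal
  -- apply the growth lemma with m = n + t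
  have hgrow := geom_sum_grow r hrpos (n+t) C4 hC4 (key (n+t)) n t rfl
  rw [← hlam] at hgrow
  -- pass to unweighted norms
  have hwn : 0 < w ω n := w_pos ω n
  have hratio : w ω (n+t) ≤ ((t:ℝ)+1)^ω * w ω n := w_ratio hω n t
  have h6 : ‖z n‖ * w ω n ≤ (C4+1) * (lam^t * (‖z (n+t)‖ * (((t:ℝ)+1)^ω * w ω n))) := by
    calc ‖z n‖ * w ω n = r n := by rw [hr]
      _ ≤ (C4+1) * (lam^t * r (n+t)) := hgrow
      _ = (C4+1) * (lam^t * (‖z (n+t)‖ * w ω (n+t))) := by rw [hr]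
      _ ≤ (C4+1) * (lam^t * (‖z (n+t)‖ * (((t:ℝ)+1)^ω * w ω n))) := by
          apply mul_le_mul_of_nonneg_left _ (by linarith)
          apply mul_le_mul_of_nonneg_left _ (pow_nonneg hlam0.le t)
          exact mul_le_mul_of_nonneg_left hratio (norm_nonneg _)
  have h7 : ‖z n‖ ≤ (C4+1) * ((((t:ℝ)+1)^ω * lam^t) * ‖z (n+t)‖) := by
    have h8 : ‖z n‖ * w ω n ≤ ((C4+1) * ((((t:ℝ)+1)^ω * lam^t) * ‖z (n+t)‖)) * w ω n := by
      calc ‖z n‖ * w ω n ≤ (C4+1) * (lam^t * (‖z (n+t)‖ * (((t:ℝ)+1)^ω * w ω n))) := h6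
        _ = ((C4+1) * ((((t:ℝ)+1)^ω * lam^t) * ‖z (n+t)‖)) * w ω n := by ring
    exact le_of_mul_le_mul_right h8 hwn
  have h9 : (((t:ℝ)+1)^ω * lam^t) ≤ B * lam'^t := hpoly t
  calc ‖Phi A (n:ℤ) 0 u‖ = ‖z n‖ := by rw [hz]
    _ ≤ (C4+1) * ((((t:ℝ)+1)^ω * lam^t) * ‖z (n+t)‖) := h7
    _ ≤ (C4+1) * ((B * lam'^t) * ‖z (n+t)‖) := by
        apply mul_le_mul_of_nonneg_left _ (by linarith)
        exact mul_le_mul_of_nonneg_right h9 (norm_nonneg _)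
    _ = (C4+1) * B * lam'^t * ‖Phi A ((n+t : ℕ) : ℤ) 0 u‖ := by rw [hz]; ring

/-! ### Uniform bound for the unstable projection -/

set_option maxHeartbeats 1600000 in
lemma proj_bound {d : ℕ} {ω M L C0 : ℝ} {A : ℤ → (Ed d ≃L[ℝ] Ed d)}
    (hω : 0 ≤ ω) (hM : 0 < M)
    (hA : ∀ k : ℤ, 0 ≤ k → ‖(A k : Ed d →L[ℝ] Ed d)‖ ≤ M ∧
      ‖((A k).symm : Ed d →L[ℝ] Ed d)‖ ≤ M)
    (hL : 1 ≤ L) (hadm : ADMprop ω A L) (hC0 : 1 ≤ C0)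
    (hC0b : ∀ v ∈ S0 ω A, ∀ k : ℕ, ‖Phi A (k:ℤ) 0 v‖ * w ω k ≤ C0 * ‖v‖)
    (U0 : Submodule ℝ (Ed d)) (pS pU : Ed d →L[ℝ] Ed d)
    (hsum : ∀ v, pS v + pU v = v)
    (hpSmem : ∀ v, pS v ∈ S0 ω A) (hpUmem : ∀ v, pU v ∈ U0)
    (Ku lamu : ℝ) (hKu : 1 ≤ Ku) (hlu0 : 0 < lamu) (hlu1 : lamu < 1)
    (hunst : ∀ u ∈ U0, ∀ n t : ℕ,
      ‖Phi A (n:ℤ) 0 u‖ ≤ Ku * lamu^t * ‖Phi A ((n+t : ℕ) : ℤ) 0 u‖) :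
    ∃ KQ : ℝ, 1 ≤ KQ ∧ ∀ (n : ℕ) (ξ : Ed d),
      ‖Phi A (n:ℤ) 0 (pU (Phi A 0 (n:ℤ) ξ))‖ ≤ KQ * ‖ξ‖ := by
  have hAb := norm_A_apply_le hA
  set ρ : ℝ := 2 ^ ω with hρdef
  have hρ : 0 < ρ := Real.rpow_pos_of_pos (by norm_num) ω
  have hρ1 : 1 ≤ ρ := Real.one_le_rpow (by norm_num) hω
  -- choose N with ρ * C0 * Ku * lamu^N ≤ 1/2
  have hhalf : (0:ℝ) < (2 * (ρ * C0 * Ku))⁻¹ := by positivity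
  obtain ⟨N, hN⟩ := exists_pow_lt_of_lt_one hhalf hlu1
  have hNle : ∀ n : ℕ, N ≤ n → ρ * C0 * Ku * lamu^n ≤ 1/2 := by
    intro n hn
    have h1 : lamu^n ≤ lamu^N := pow_le_pow_of_le_one hlu0.le hlu1.le hn
    have h2 : lamu^n ≤ (2 * (ρ * C0 * Ku))⁻¹ := le_of_lt (lt_of_le_of_lt h1 hN)
    have h4 : ρ * C0 * Ku * lamu^n ≤ ρ * C0 * Ku * (2 * (ρ*C0*Ku))⁻¹ :=
      mul_le_mul_of_nonneg_left h2 (by positivity)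
    have h5 : ρ * C0 * Ku * (2 * (ρ*C0*Ku))⁻¹ = 1/2 := by
      field_simp
    linarith
  set CQ : ℝ := 2 * (ρ * (C0+1) * L * M) with hCQ
  have hCQ0 : 0 < CQ := by positivity
  -- main estimate for n ≥ N
  have main : ∀ n : ℕ, N ≤ n → ∀ ξ : Ed d,
      ‖Phi A (n:ℤ) 0 (pU (Phi A 0 (n:ℤ) ξ))‖ ≤ CQ * ‖ξ‖ := by
    intro n hn ξ
    by_cases hξ0 : ξ = 0
    · subst hξ0
      simp only [map_zero, norm_zero, mul_zero, le_refl]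
    have hξpos : 0 < ‖ξ‖ := norm_pos_iff.2 hξ0
    set a : Ed d := Phi A 0 (n:ℤ) ξ with ha
    set s0 : Ed d := pS a with hs0def
    set u0 : Ed d := pU a with hu0def
    have hs0 : s0 ∈ S0 ω A := hpSmem a
    have hu0 : u0 ∈ U0 := hpUmem a
    have hsu : s0 + u0 = a := hsum a
    set zs : ℕ → Ed d := fun k => Phi A (k:ℤ) 0 s0 with hzs
    set zu : ℕ → Ed d := fun k => Phi A (k:ℤ) 0 u0 with hzu
    have hzsstep : ∀ k : ℕ, zs (k+1) = A (k:ℤ) (zs k) := by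
      intro k
      rw [hzs]
      simp only
      have hc : ((k+1 : ℕ) : ℤ) = (k:ℤ) + 1 := by push_cast; ring
      rw [hc, phi_step]
    have hzustep : ∀ k : ℕ, zu (k+1) = A (k:ℤ) (zu k) := by
      intro k
      rw [hzu]
      simp only
      have hc : ((k+1 : ℕ) : ℤ) = (k:ℤ) + 1 := by push_cast; ring
      rw [hc, phi_step]
    have hzu0 : zu 0 = u0 := by rw [hzu]; simp only [Nat.cast_zero]; exact phi_self A 0 u0
    -- the key identity
    have hkey : zs (n+1) + zu (n+1) = A (n:ℤ) ξ := by
      have h1 : zs (n+1) + zu (n+1) = Phi A ((n+1 : ℕ):ℤ) 0 (s0 + u0) := by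
        rw [hzs, hzu]
        simp only [map_add]
      rw [h1, hsu, ha]
      have h2 : Phi A ((n+1 : ℕ):ℤ) 0 (Phi A 0 (n:ℤ) ξ) = Phi A ((n+1 : ℕ):ℤ) (n:ℤ) ξ :=
        phi_cocycle A _ 0 _ ξ
      rw [h2]
      have hc : ((n+1 : ℕ) : ℤ) = (n:ℤ) + 1 := by push_cast; ring
      rw [hc, phi_step, phi_self]
    set c : ℝ := (w ω (n+1) * ‖ξ‖)⁻¹ with hc
    have hc0 : 0 < c := by
      rw [hc]
      exact inv_pos.2 (mul_pos (w_pos ω (n+1)) hξpos)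
    have hcinv : c⁻¹ = w ω (n+1) * ‖ξ‖ := by rw [hc, inv_inv]
    set f : ℕ → Ed d := fun j => if j = n+1 then c • (A (n:ℤ) ξ) else 0 with hf
    have hfb : ∀ j, ‖f j‖ * w ω j ≤ M := by
      intro j
      by_cases hj : j = n+1
      · subst hj
        have hfv : f (n+1) = c • (A (n:ℤ) ξ) := by rw [hf]; simp
        rw [hfv, norm_smul, Real.norm_eq_abs, abs_of_nonneg hc0.le]
        have h1 : ‖A (n:ℤ) ξ‖ ≤ M * ‖ξ‖ := hAb n ξ
        calc c * ‖A (n:ℤ) ξ‖ * w ω (n+1) ≤ c * (M * ‖ξ‖) * w ω (n+1) := by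
              apply mul_le_mul_of_nonneg_right _ (w_pos ω (n+1)).le
              exact mul_le_mul_of_nonneg_left h1 hc0.le
          _ = M * (c * (w ω (n+1) * ‖ξ‖)) := by ring
          _ = M := by rw [hc, inv_mul_cancel₀ (mul_pos (w_pos ω (n+1)) hξpos).ne', mul_one]
      · have hfv : f j = 0 := by rw [hf]; simp [hj]
        rw [hfv]
        simp only [norm_zero, zero_mul]
        exact hM.le
    obtain ⟨x, hxb, hxrec⟩ := hadm f M hfb
    set y : ℕ → Ed d := fun j => if j ≤ n then (-c) • zu j else c • zs j with hy
    have hyrec : ∀ j : ℕ, y (j+1) = A (j:ℤ) (y j) + f (j+1) := by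
      intro j
      rw [hy, hf]
      simp only
      by_cases hj : j + 1 ≤ n
      · rw [if_pos hj, if_pos (by omega : j ≤ n), if_neg (by omega : ¬ (j+1 = n+1))]
        rw [map_smul, ← hzustep j, add_zero]
      · by_cases hj2 : j = n
        · subst hj2
          rw [if_neg (by omega : ¬ (j + 1 ≤ j)), if_pos (le_refl j), if_pos rfl]
          rw [map_smul, ← hzustep j, ← hkey]
          rw [smul_add, neg_smul]
          abel
        · have hj3 : n < j := by omega
          rw [if_neg (by omega : ¬ (j + 1 ≤ n)), if_neg (by omega : ¬ (j ≤ n)),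
            if_neg (by omega : ¬ (j+1 = n+1))]
          rw [map_smul, ← hzsstep j, add_zero]
    have hybdd : ∃ cb, ∀ j : ℕ, ‖y j - x j‖ * w ω j ≤ cb := by
      set B1 : ℝ := c * (∑ i ∈ Finset.range (n+1), ‖zu i‖ * w ω i) with hB1
      have hB1nn : 0 ≤ B1 :=
        mul_nonneg hc0.le (Finset.sum_nonneg
          (fun i _ => mul_nonneg (norm_nonneg _) (w_pos ω i).le))
      set B2 : ℝ := c * (C0 * ‖s0‖) with hB2
      have hB2nn : 0 ≤ B2 :=
        mul_nonneg hc0.le (mul_nonneg (by linarith) (norm_nonneg _))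
      have hyb : ∀ j, ‖y j‖ * w ω j ≤ B1 + B2 := by
        intro j
        rw [hy]
        simp only
        by_cases hj : j ≤ n
        · rw [if_pos hj, norm_smul, Real.norm_eq_abs, abs_neg, abs_of_nonneg hc0.le]
          have h1 : ‖zu j‖ * w ω j ≤ ∑ i ∈ Finset.range (n+1), ‖zu i‖ * w ω i :=
            Finset.single_le_sum
              (fun i _ => mul_nonneg (norm_nonneg _) (w_pos ω i).le)
              (Finset.mem_range.2 (by omega))
          have h2 : c * ‖zu j‖ * w ω j ≤ B1 := by
            rw [hB1, mul_assoc]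
            exact mul_le_mul_of_nonneg_left h1 hc0.le
          linarith
        · rw [if_neg hj, norm_smul, Real.norm_eq_abs, abs_of_nonneg hc0.le]
          have h1 : ‖zs j‖ * w ω j ≤ C0 * ‖s0‖ := hC0b s0 hs0 j
          have h2 : c * ‖zs j‖ * w ω j ≤ B2 := by
            rw [hB2, mul_assoc]
            exact mul_le_mul_of_nonneg_left h1 hc0.le
          linarith
      refine ⟨B1 + B2 + L * M, fun j => ?_⟩
      calc ‖y j - x j‖ * w ω j ≤ (‖y j‖ + ‖x j‖) * w ω j :=
            mul_le_mul_of_nonneg_right (norm_sub_le _ _) (w_pos ω j).le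
        _ = ‖y j‖ * w ω j + ‖x j‖ * w ω j := by ring
        _ ≤ (B1 + B2) + L * M := add_le_add (hyb j) (hxb j)
    have hδ := delta_est hC0b x y f hxrec hyrec hybdd
    have hy0 : y 0 = (-c) • u0 := by
      rw [hy]
      simp only [if_pos (Nat.zero_le n)]
      rw [hzu0]
    have hx0le : ‖x 0‖ ≤ L * M := by
      have := hxb 0
      rwa [w_zero, mul_one] at this
    have hδ0 : ‖y 0 - x 0‖ ≤ c * ‖u0‖ + L * M := by
      calc ‖y 0 - x 0‖ ≤ ‖y 0‖ + ‖x 0‖ := norm_sub_le _ _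
        _ ≤ c * ‖u0‖ + L * M := by
            apply add_le_add _ hx0le
            rw [hy0, norm_smul, Real.norm_eq_abs, abs_neg, abs_of_nonneg hc0.le]
    have hyn : ‖y n‖ = c * ‖zu n‖ := by
      rw [hy]
      simp only [if_pos (le_refl n)]
      rw [norm_smul, Real.norm_eq_abs, abs_neg, abs_of_nonneg hc0.le]
    -- the central weighted estimate at n
    have hmain : c * ‖zu n‖ * w ω n ≤ C0 * (c * ‖u0‖) + (C0 + 1) * (L * M) := by
      have h1 : ‖y n‖ ≤ ‖y n - x n‖ + ‖x n‖ := by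
        calc ‖y n‖ = ‖(y n - x n) + x n‖ := by rw [sub_add_cancel]
          _ ≤ ‖y n - x n‖ + ‖x n‖ := norm_add_le _ _
      have h2 : ‖y n‖ * w ω n ≤ (‖y n - x n‖ + ‖x n‖) * w ω n :=
        mul_le_mul_of_nonneg_right h1 (w_pos ω n).le
      have h3 : ‖y n - x n‖ * w ω n ≤ C0 * (c * ‖u0‖ + L * M) := by
        calc ‖y n - x n‖ * w ω n ≤ C0 * ‖y 0 - x 0‖ := hδ n
          _ ≤ C0 * (c * ‖u0‖ + L * M) := mul_le_mul_of_nonneg_left hδ0 (by linarith)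
      have h4 : ‖x n‖ * w ω n ≤ L * M := hxb n
      calc c * ‖zu n‖ * w ω n = ‖y n‖ * w ω n := by rw [hyn]
        _ ≤ ‖y n - x n‖ * w ω n + ‖x n‖ * w ω n := by rw [add_mul] at h2; exact h2
        _ ≤ C0 * (c * ‖u0‖ + L * M) + L * M := add_le_add h3 h4
        _ = C0 * (c * ‖u0‖) + (C0 + 1) * (L * M) := by ring
    -- multiply by c⁻¹
    have hmain2 : ‖zu n‖ * w ω n ≤ C0 * ‖u0‖ + (C0 + 1) * (L * M) * (w ω (n+1) * ‖ξ‖) := by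
      have h1 := mul_le_mul_of_nonneg_left hmain (inv_nonneg.2 hc0.le)
      have e1 : c⁻¹ * (c * ‖zu n‖ * w ω n) = ‖zu n‖ * w ω n := by
        field_simp
      have e2 : c⁻¹ * (C0 * (c * ‖u0‖) + (C0 + 1) * (L * M)) =
          C0 * ‖u0‖ + (C0 + 1) * (L * M) * c⁻¹ := by
        field_simp
      rw [e1, e2, hcinv] at h1
      exact h1
    -- insert the unstable estimate
    have hu0le : ‖u0‖ ≤ Ku * lamu^n * ‖zu n‖ := by
      have h1 := hunst u0 hu0 0 n
      have h2 : ((0:ℕ):ℤ) = (0:ℤ) := rfl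
      rw [h2, phi_self] at h1
      have h3 : ((0+n : ℕ):ℤ) = ((n:ℕ):ℤ) := by norm_num
      rw [h3] at h1
      exact h1
    have hw1 : 1 ≤ w ω n := one_le_w hω n
    have hwn1 : w ω (n+1) ≤ ρ * w ω n := w_succ_le hω n
    have hzuw : ‖zu n‖ ≤ ‖zu n‖ * w ω n :=
      le_mul_of_one_le_right (norm_nonneg _) hw1
    have hfin : ‖zu n‖ * w ω n ≤
        (1/2) * (‖zu n‖ * w ω n) + ρ * (C0+1) * (L * M) * (w ω n * ‖ξ‖) := by
      have h1 : C0 * ‖u0‖ ≤ C0 * (Ku * lamu^n * ‖zu n‖) :=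
        mul_le_mul_of_nonneg_left hu0le (by linarith)
      have h2 : C0 * (Ku * lamu^n * ‖zu n‖) ≤ (ρ * C0 * Ku * lamu^n) * (‖zu n‖ * w ω n) := by
        have h3 : C0 * (Ku * lamu^n * ‖zu n‖) = (C0 * Ku * lamu^n) * ‖zu n‖ := by ring
        have h40 : 0 ≤ C0 * Ku * lamu^n :=
          mul_nonneg (mul_nonneg (by linarith) (by linarith)) (pow_nonneg hlu0.le n)
        have h4 : (C0 * Ku * lamu^n) * ‖zu n‖ ≤ (ρ * C0 * Ku * lamu^n) * ‖zu n‖ := by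
          apply mul_le_mul_of_nonneg_right _ (norm_nonneg _)
          nlinarith [h40, hρ1]
        have h41 : 0 ≤ ρ * C0 * Ku * lamu^n := by nlinarith [h40, hρ]
        have h5 : (ρ * C0 * Ku * lamu^n) * ‖zu n‖ ≤ (ρ * C0 * Ku * lamu^n) * (‖zu n‖ * w ω n) :=
          mul_le_mul_of_nonneg_left hzuw h41
        linarith
      have h6 : (ρ * C0 * Ku * lamu^n) * (‖zu n‖ * w ω n) ≤ (1/2) * (‖zu n‖ * w ω n) := by
        apply mul_le_mul_of_nonneg_right (hNle n hn)
        exact mul_nonneg (norm_nonneg _) (w_pos ω n).le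
      have h7 : (C0 + 1) * (L * M) * (w ω (n+1) * ‖ξ‖) ≤
          ρ * (C0+1) * (L * M) * (w ω n * ‖ξ‖) := by
        have h8 : w ω (n+1) * ‖ξ‖ ≤ (ρ * w ω n) * ‖ξ‖ :=
          mul_le_mul_of_nonneg_right hwn1 (norm_nonneg _)
        calc (C0 + 1) * (L * M) * (w ω (n+1) * ‖ξ‖)
            ≤ (C0 + 1) * (L * M) * ((ρ * w ω n) * ‖ξ‖) := by
              apply mul_le_mul_of_nonneg_left h8
              positivity
          _ = ρ * (C0+1) * (L * M) * (w ω n * ‖ξ‖) := by ring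
      calc ‖zu n‖ * w ω n ≤ C0 * ‖u0‖ + (C0 + 1) * (L * M) * (w ω (n+1) * ‖ξ‖) := hmain2
        _ ≤ (1/2) * (‖zu n‖ * w ω n) + ρ * (C0+1) * (L * M) * (w ω n * ‖ξ‖) := by
            have := (h1.trans h2).trans h6
            linarith
    have hfin2 : ‖zu n‖ * w ω n ≤ CQ * ‖ξ‖ * w ω n := by
      rw [hCQ]
      nlinarith [hfin]
    have hfin3 : ‖zu n‖ ≤ CQ * ‖ξ‖ :=
      le_of_mul_le_mul_right hfin2 (w_pos ω n)
    exact hfin3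
  -- assemble the global constant
  set Qop : ℕ → (Ed d →L[ℝ] Ed d) := fun i =>
    ((Phi A (i:ℤ) 0 : Ed d →L[ℝ] Ed d).comp
      (pU.comp ((Phi A 0 (i:ℤ) : Ed d →L[ℝ] Ed d)))) with hQop
  have hQopapp : ∀ (i : ℕ) (ξ : Ed d), Qop i ξ = Phi A (i:ℤ) 0 (pU (Phi A 0 (i:ℤ) ξ)) := by
    intro i ξ
    rw [hQop]
    rfl
  set SN : ℝ := ∑ i ∈ Finset.range N, ‖Qop i‖ with hSN
  have hSNnn : 0 ≤ SN := Finset.sum_nonneg (fun i _ => norm_nonneg _)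
  refine ⟨1 + CQ + SN, by linarith, ?_⟩
  intro n ξ
  rcases le_or_gt N n with hn | hn
  · calc ‖Phi A (n:ℤ) 0 (pU (Phi A 0 (n:ℤ) ξ))‖ ≤ CQ * ‖ξ‖ := main n hn ξ
      _ ≤ (1 + CQ + SN) * ‖ξ‖ := by
          apply mul_le_mul_of_nonneg_right _ (norm_nonneg _)
          linarith
  · have h1 : ‖Qop n ξ‖ ≤ ‖Qop n‖ * ‖ξ‖ := (Qop n).le_opNorm ξ
    have h2 : ‖Qop n‖ ≤ SN := by
      rw [hSN]
      exact Finset.single_le_sum (fun i _ => norm_nonneg (Qop i)) (Finset.mem_range.2 hn)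
    calc ‖Phi A (n:ℤ) 0 (pU (Phi A 0 (n:ℤ) ξ))‖ = ‖Qop n ξ‖ := by rw [hQopapp]
      _ ≤ ‖Qop n‖ * ‖ξ‖ := h1
      _ ≤ SN * ‖ξ‖ := mul_le_mul_of_nonneg_right h2 (norm_nonneg _)
      _ ≤ (1 + CQ + SN) * ‖ξ‖ := by
          apply mul_le_mul_of_nonneg_right _ (norm_nonneg _)
          linarith

end PerronAux

open PerronAux in
set_option maxHeartbeats 1600000 in
theorem perron_pos_implies_hyperbolic' (d : ℕ) (hd : 1 ≤ d) (ω M : ℝ) (hω : 0 ≤ ω) (hM : 0 < M)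
    (A : ℤ → (Ed d ≃L[ℝ] Ed d))
    (hA : ∀ k : ℤ, 0 ≤ k → ‖(A k : Ed d →L[ℝ] Ed d)‖ ≤ M ∧
      ‖((A k).symm : Ed d →L[ℝ] Ed d)‖ ≤ M)
    (hperron : PerronBPos ω A) :
    ∃ (K lam : ℝ) (P Q : ℤ → (Ed d →L[ℝ] Ed d)),
      (0 < K ∧ 0 < lam ∧ lam < 1 ∧
      (∀ k ∈ {k : ℤ | 0 ≤ k}, P k + Q k = 1) ∧
      (∀ k ∈ {k : ℤ | 0 ≤ k}, (P k).comp (P k) = P k ∧ (Q k).comp (Q k) = Q k) ∧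
      (∀ k ∈ {k : ℤ | 0 ≤ k}, IsCompl (LinearMap.range (P k : Ed d →ₗ[ℝ] Ed d)) (LinearMap.range (Q k : Ed d →ₗ[ℝ] Ed d))) ∧
      (∀ k ∈ {k : ℤ | 0 ≤ k}, k + 1 ∈ {k : ℤ | 0 ≤ k} →
        (A k) '' ((LinearMap.range (P k : Ed d →ₗ[ℝ] Ed d)) : Set (Ed d)) = ((LinearMap.range (P (k + 1) : Ed d →ₗ[ℝ] Ed d)) : Set (Ed d)) ∧
        (A k) '' ((LinearMap.range (Q k : Ed d →ₗ[ℝ] Ed d)) : Set (Ed d)) = ((LinearMap.range (Q (k + 1) : Ed d →ₗ[ℝ] Ed d)) : Set (Ed d))) ∧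
      (∀ l ∈ {k : ℤ | 0 ≤ k}, ∀ k ∈ {k : ℤ | 0 ≤ k}, l ≤ k → ∀ v ∈ LinearMap.range (P l : Ed d →ₗ[ℝ] Ed d),
        ‖(Phi A k l) v‖ ≤ K * lam ^ (k - l).toNat * ‖v‖) ∧
      (∀ l ∈ {k : ℤ | 0 ≤ k}, ∀ k ∈ {k : ℤ | 0 ≤ k}, k ≤ l → ∀ v ∈ LinearMap.range (Q l : Ed d →ₗ[ℝ] Ed d),
        ‖(Phi A k l) v‖ ≤ K * lam ^ (l - k).toNat * ‖v‖) ∧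
      (∀ k ∈ {k : ℤ | 0 ≤ k}, ‖P k‖ ≤ K ∧ ‖Q k‖ ≤ K)) := by
  classical
  obtain ⟨L, hL, hadm⟩ := exists_adm hω hM hA hperron
  obtain ⟨C0, hC0, hC0b⟩ := exists_C0 ω A
  obtain ⟨Ks, mu, hKs1, hmu0, hmu1, hstab⟩ := stable_est hω hM hA hL hadm hC0 hC0b
  obtain ⟨U0, hcompl⟩ := Submodule.exists_isCompl (S0 ω A)
  set pSl : Ed d →ₗ[ℝ] Ed d :=
    (S0 ω A).subtype ∘ₗ ((S0 ω A).linearProjOfIsCompl U0 hcompl) with hpSl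
  set pUl : Ed d →ₗ[ℝ] Ed d :=
    U0.subtype ∘ₗ (U0.linearProjOfIsCompl (S0 ω A) hcompl.symm) with hpUl
  set pS : Ed d →L[ℝ] Ed d := LinearMap.toContinuousLinearMap pSl with hpS
  set pU : Ed d →L[ℝ] Ed d := LinearMap.toContinuousLinearMap pUl with hpU
  have hpSapp : ∀ v, pS v = ((S0 ω A).linearProjOfIsCompl U0 hcompl v : Ed d) := by
    intro v
    rw [hpS]
    simp [hpSl]
  have hpUapp : ∀ v, pU v = (U0.linearProjOfIsCompl (S0 ω A) hcompl.symm v : Ed d) := by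
    intro v
    rw [hpU]
    simp [hpUl]
  have hsum : ∀ v, pS v + pU v = v := by
    intro v
    rw [hpSapp, hpUapp]
    exact Submodule.projection_add_projection_eq_self hcompl v
  have hpSmem : ∀ v, pS v ∈ S0 ω A := by
    intro v
    rw [hpSapp]
    exact ((S0 ω A).linearProjOfIsCompl U0 hcompl v).2
  have hpUmem : ∀ v, pU v ∈ U0 := by
    intro v
    rw [hpUapp]
    exact (U0.linearProjOfIsCompl (S0 ω A) hcompl.symm v).2
  have hpS_id : ∀ v ∈ S0 ω A, pS v = v := by
    intro v hv
    rw [hpSapp]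
    have := Submodule.linearProjOfIsCompl_apply_left hcompl ⟨v, hv⟩
    exact congrArg Subtype.val this
  have hpU_id : ∀ u ∈ U0, pU u = u := by
    intro u hu
    rw [hpUapp]
    have := Submodule.linearProjOfIsCompl_apply_left hcompl.symm ⟨u, hu⟩
    exact congrArg Subtype.val this
  have hpU_zero : ∀ v ∈ S0 ω A, pU v = 0 := by
    intro v hv
    rw [hpUapp]
    have := Submodule.projectionOnto_apply_of_mem_right hcompl.symm hv
    change ((U0.projectionOnto (S0 ω A) hcompl.symm v : U0) : Ed d) = 0
    rw [this, Submodule.coe_zero]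
  obtain ⟨Ku, lamu, hKu1, hlu0, hlu1, hunst⟩ :=
    unstable_est hω hM hA hL hadm hC0 hC0b U0 pU ‖pU‖ (norm_nonneg _)
      hpU_zero hpU_id (fun v => pU.le_opNorm v)
  obtain ⟨KQ, hKQ1, hQb⟩ :=
    proj_bound hω hM hA hL hadm hC0 hC0b U0 pS pU hsum hpSmem hpUmem
      Ku lamu hKu1 hlu0 hlu1 hunst
  -- the projections
  set P : ℤ → (Ed d →L[ℝ] Ed d) := fun n =>
    ((Phi A n 0 : Ed d →L[ℝ] Ed d).comp (pS.comp ((Phi A 0 n : Ed d →L[ℝ] Ed d)))) with hP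
  set Q : ℤ → (Ed d →L[ℝ] Ed d) := fun n =>
    ((Phi A n 0 : Ed d →L[ℝ] Ed d).comp (pU.comp ((Phi A 0 n : Ed d →L[ℝ] Ed d)))) with hQ
  have hPapp : ∀ (n : ℤ) (v : Ed d), P n v = Phi A n 0 (pS (Phi A 0 n v)) := fun n v => rfl
  have hQapp : ∀ (n : ℤ) (v : Ed d), Q n v = Phi A n 0 (pU (Phi A 0 n v)) := fun n v => rfl
  have hPhiInv : ∀ (n : ℤ) (v : Ed d), Phi A n 0 (Phi A 0 n v) = v := by
    intro n v
    rw [phi_cocycle, phi_self]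
  have hPhiInv' : ∀ (n : ℤ) (v : Ed d), Phi A 0 n (Phi A n 0 v) = v := by
    intro n v
    rw [phi_cocycle, phi_self]
  -- constants
  set K : ℝ := Ks + Ku + KQ + 2 with hK
  have hKpos : 0 < K := by rw [hK]; linarith
  set lam : ℝ := max mu lamu with hlam
  have hlam0 : 0 < lam := lt_of_lt_of_le hmu0 (le_max_left _ _)
  have hlam1 : lam < 1 := max_lt hmu1 hlu1
  -- range characterizations
  have hrangeP : ∀ k : ℤ, ∀ v : Ed d,
      v ∈ LinearMap.range (P k : Ed d →ₗ[ℝ] Ed d) ↔ ∃ s ∈ S0 ω A, Phi A k 0 s = v := by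
    intro k v
    constructor
    · rintro ⟨x, rfl⟩
      exact ⟨pS (Phi A 0 k x), hpSmem _, (hPapp k x).symm⟩
    · rintro ⟨s, hs, rfl⟩
      refine ⟨Phi A k 0 s, ?_⟩
      rw [ContinuousLinearMap.coe_coe, hPapp, hPhiInv', hpS_id s hs]
  have hrangeQ : ∀ k : ℤ, ∀ v : Ed d,
      v ∈ LinearMap.range (Q k : Ed d →ₗ[ℝ] Ed d) ↔ ∃ u ∈ U0, Phi A k 0 u = v := by
    intro k v
    constructor
    · rintro ⟨x, rfl⟩
      exact ⟨pU (Phi A 0 k x), hpUmem _, (hQapp k x).symm⟩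
    · rintro ⟨u, hu, rfl⟩
      refine ⟨Phi A k 0 u, ?_⟩
      rw [ContinuousLinearMap.coe_coe, hQapp, hPhiInv', hpU_id u hu]
  refine ⟨K, lam, P, Q, hKpos, hlam0, hlam1, ?_, ?_, ?_, ?_, ?_, ?_, ?_⟩
  · -- P + Q = 1
    intro k _
    ext v
    simp only [ContinuousLinearMap.add_apply, ContinuousLinearMap.one_apply]
    rw [hPapp, hQapp, ← map_add, hsum, hPhiInv]
  · -- idempotency
    intro k _
    constructor
    · ext v
      simp only [ContinuousLinearMap.comp_apply]
      rw [hPapp, hPapp, hPhiInv', hpS_id _ (hpSmem _)]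
    · ext v
      simp only [ContinuousLinearMap.comp_apply]
      rw [hQapp, hQapp, hPhiInv', hpU_id _ (hpUmem _)]
  · -- IsCompl
    intro k _
    apply IsCompl.of_eq
    · -- inf = ⊥
      rw [Submodule.eq_bot_iff]
      rintro v ⟨hvP, hvQ⟩
      obtain ⟨s, hs, hsv⟩ := (hrangeP k v).1 hvP
      obtain ⟨u, hu, huv⟩ := (hrangeQ k v).1 hvQ
      have hsu : s = u := by
        have h1 : Phi A k 0 s = Phi A k 0 u := by rw [hsv, huv]
        have h2 := congrArg (Phi A 0 k) h1
        rwa [hPhiInv', hPhiInv'] at h2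
      have hmem : s ∈ (S0 ω A) ⊓ U0 := ⟨hs, hsu ▸ hu⟩
      have hbot : (S0 ω A) ⊓ U0 = ⊥ := hcompl.inf_eq_bot
      rw [hbot, Submodule.mem_bot] at hmem
      rw [← hsv, hmem, map_zero]
    · -- sup = ⊤
      rw [Submodule.eq_top_iff']
      intro v
      apply Submodule.mem_sup.2
      refine ⟨P k v, (hrangeP k _).2 ⟨pS (Phi A 0 k v), hpSmem _, (hPapp k v).symm⟩,
        Q k v, (hrangeQ k _).2 ⟨pU (Phi A 0 k v), hpUmem _, (hQapp k v).symm⟩, ?_⟩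
      rw [hPapp, hQapp, ← map_add, hsum, hPhiInv]
  · -- invariance
    intro k _ _
    have hstepim : ∀ (W : Submodule ℝ (Ed d))
        (hr : ∀ m : ℤ, ∀ v : Ed d, (∃ s ∈ W, Phi A m 0 s = v) →
          v ∈ (fun m => (Phi A m 0 '' (W : Set (Ed d)))) m), True := fun _ _ => trivial
    constructor
    · ext x
      constructor
      · rintro ⟨v, hv, rfl⟩
        obtain ⟨s, hs, rfl⟩ := (hrangeP k v).1 hv
        apply (hrangeP (k+1) _).2
        exact ⟨s, hs, phi_step A 0 k s⟩
      · intro hx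
        obtain ⟨s, hs, rfl⟩ := (hrangeP (k+1) _).1 hx
        refine ⟨Phi A k 0 s, (hrangeP k _).2 ⟨s, hs, rfl⟩, ?_⟩
        exact (phi_step A 0 k s).symm
    · ext x
      constructor
      · rintro ⟨v, hv, rfl⟩
        obtain ⟨u, hu, rfl⟩ := (hrangeQ k v).1 hv
        apply (hrangeQ (k+1) _).2
        exact ⟨u, hu, phi_step A 0 k u⟩
      · intro hx
        obtain ⟨u, hu, rfl⟩ := (hrangeQ (k+1) _).1 hx
        refine ⟨Phi A k 0 u, (hrangeQ k _).2 ⟨u, hu, rfl⟩, ?_⟩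
        exact (phi_step A 0 k u).symm
  · -- stable decay
    intro l hl k hk hlk v hv
    obtain ⟨s, hs, rfl⟩ := (hrangeP l v).1 hv
    have hl0 : (0:ℤ) ≤ l := hl
    have hk0 : (0:ℤ) ≤ k := hk
    set n : ℕ := l.toNat with hn
    set t : ℕ := (k - l).toNat with ht
    have hcast1 : ((n : ℕ) : ℤ) = l := by omega
    have hcast2 : ((n + t : ℕ) : ℤ) = k := by push_cast; omega
    have h1 := hstab s hs n t
    rw [hcast1, hcast2] at h1
    have h2 : Phi A k l (Phi A l 0 s) = Phi A k 0 s := phi_cocycle A k l 0 s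
    rw [h2]
    have h3 : mu ^ t ≤ lam ^ t := pow_le_pow_left₀ hmu0.le (le_max_left _ _) t
    have h4 : Ks * mu ^ t ≤ K * lam ^ t := by
      have e1 : Ks ≤ K := by rw [hK]; linarith
      have := mul_le_mul e1 h3 (pow_nonneg hmu0.le t) (by linarith : (0:ℝ) ≤ K)
      exact this
    calc ‖Phi A k 0 s‖ ≤ Ks * mu ^ t * ‖Phi A l 0 s‖ := h1
      _ ≤ K * lam ^ t * ‖Phi A l 0 s‖ :=
        mul_le_mul_of_nonneg_right h4 (norm_nonneg _)
  · -- unstable decay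
    intro l hl k hk hkl v hv
    obtain ⟨u, hu, rfl⟩ := (hrangeQ l v).1 hv
    have hl0 : (0:ℤ) ≤ l := hl
    have hk0 : (0:ℤ) ≤ k := hk
    set n : ℕ := k.toNat with hn
    set t : ℕ := (l - k).toNat with ht
    have hcast1 : ((n : ℕ) : ℤ) = k := by omega
    have hcast2 : ((n + t : ℕ) : ℤ) = l := by push_cast; omega
    have h1 := hunst u hu n t
    rw [hcast1, hcast2] at h1
    have h2 : Phi A k l (Phi A l 0 u) = Phi A k 0 u := phi_cocycle A k l 0 u
    rw [h2]
    have h3 : lamu ^ t ≤ lam ^ t := pow_le_pow_left₀ hlu0.le (le_max_right _ _) t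
    have h4 : Ku * lamu ^ t ≤ K * lam ^ t := by
      have e1 : Ku ≤ K := by rw [hK]; linarith
      exact mul_le_mul e1 h3 (pow_nonneg hlu0.le t) (by linarith : (0:ℝ) ≤ K)
    calc ‖Phi A k 0 u‖ ≤ Ku * lamu ^ t * ‖Phi A l 0 u‖ := h1
      _ ≤ K * lam ^ t * ‖Phi A l 0 u‖ :=
        mul_le_mul_of_nonneg_right h4 (norm_nonneg _)
  · -- norms
    intro k hk
    have hk0 : (0:ℤ) ≤ k := hk
    have hQk : ∀ ξ : Ed d, ‖Q k ξ‖ ≤ KQ * ‖ξ‖ := by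
      intro ξ
      have h1 := hQb k.toNat ξ
      have hcast : ((k.toNat : ℕ) : ℤ) = k := by omega
      rw [hcast] at h1
      rw [hQapp]
      exact h1
    have hPk : ∀ ξ : Ed d, ‖P k ξ‖ ≤ (1 + KQ) * ‖ξ‖ := by
      intro ξ
      have h1 : P k ξ = ξ - Q k ξ := by
        have h2 : P k ξ + Q k ξ = ξ := by
          rw [hPapp, hQapp, ← map_add, hsum, hPhiInv]
        exact eq_sub_of_add_eq h2
      rw [h1]
      calc ‖ξ - Q k ξ‖ ≤ ‖ξ‖ + ‖Q k ξ‖ := norm_sub_le _ _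
        _ ≤ ‖ξ‖ + KQ * ‖ξ‖ := by linarith [hQk ξ]
        _ = (1 + KQ) * ‖ξ‖ := by ring
    constructor
    · have h1 : ‖P k‖ ≤ 1 + KQ :=
        ContinuousLinearMap.opNorm_le_bound _ (by linarith) hPk
      have h2 : (1:ℝ) + KQ ≤ K := by rw [hK]; linarith
      linarith
    · have h1 : ‖Q k‖ ≤ KQ :=
        ContinuousLinearMap.opNorm_le_bound _ (by linarith) hQk
      have h2 : KQ ≤ K := by rw [hK]; linarith
      linarith

end


/-- Perron property B_ω(ℤ+) implies hyperbolicity on ℤ+. -/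
theorem perron_pos_implies_hyperbolic (d : ℕ) (hd : 1 ≤ d) (ω M : ℝ) (hω : 0 ≤ ω) (hM : 0 < M)
    (A : ℤ → (Ed d ≃L[ℝ] Ed d))
    (hA : ∀ k : ℤ, 0 ≤ k → ‖(A k : Ed d →L[ℝ] Ed d)‖ ≤ M ∧
      ‖((A k).symm : Ed d →L[ℝ] Ed d)‖ ≤ M)
    (hperron : PerronBPos ω A) :
    IsHyperbolicOn A {k : ℤ | 0 ≤ k} := by
  obtain ⟨K, lam, P, Q, h⟩ := perron_pos_implies_hyperbolic' d hd ω M hω hM A hA hperron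
  exact ⟨K, lam, P, Q, h⟩
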